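/- arXiv:1205.6956 — 5 statements merged into one kernel-verified Lean document; each statement's English description precedes it below -/
import Mathlib

section
/- For all nonnegative integers i, n and every integer l ≥ 1, the finite differences of power functions satisfy the exact recurrence ∇^l i^{n+1} = (l+i)·∇^l i^n + l·∇^{l−1} i^n. -/
open Finset

noncomputable section

/-- `fdiff l g i` is the `l`-th finite difference
`∇^l g(i) = ∑_{k=0}^{l} (-1)^{l-k} C(l,k) g(i+k)`. -/
def fdiff (l : ℕ) (g : ℕ → ℝ) (i : ℕ) : ℝ :=
  ∑ k ∈ Finset.range (l + 1), (-1 : ℝ) ^ (l - k) * (l.choose k : ℝ) * g (i + k)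

/-- Exact recurrence for finite differences of power functions:
`∇^l i^{n+1} = (l + i) ∇^l i^n + l ∇^{l-1} i^n`. -/
theorem fdiff_pow_succ (i n : ℕ) (l : ℕ) (hl : 1 ≤ l) :
    fdiff l (fun j => (j : ℝ) ^ (n + 1)) i =
      ((l : ℝ) + (i : ℝ)) * fdiff l (fun j => (j : ℝ) ^ n) i +
        (l : ℝ) * fdiff (l - 1) (fun j => (j : ℝ) ^ n) i := by
  obtain ⟨m, rfl⟩ : ∃ m, l = m + 1 := ⟨l - 1, by omega⟩
  simp only [fdiff, Nat.add_sub_cancel, Finset.mul_sum]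
  have hext : ∑ k ∈ Finset.range (m + 1),
      ((m : ℝ) + 1) * ((-1 : ℝ) ^ (m - k) * (m.choose k : ℝ) * (↑(i + k)) ^ n)
      = ∑ k ∈ Finset.range (m + 1 + 1),
      ((m : ℝ) + 1) * ((-1 : ℝ) ^ (m - k) * (m.choose k : ℝ) * (↑(i + k)) ^ n) := by
    rw [Finset.sum_range_succ (n := m + 1), Nat.choose_succ_self]
    simp
  push_cast at hext ⊢
  rw [hext, ← Finset.sum_add_distrib]
  refine Finset.sum_congr rfl fun k hk => ?_
  rw [Finset.mem_range] at hk
  rcases eq_or_lt_of_le (Nat.lt_succ_iff.mp hk) with h | h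
  · subst h
    rw [Nat.choose_succ_self]
    simp [pow_succ]
    ring
  · -- k ≤ m
    have hk' : k ≤ m := by omega
    have h1 : m + 1 - k = (m - k) + 1 := by omega
    have hc : (m.choose k : ℝ) * ((m : ℝ) + 1) = ((m + 1).choose k : ℝ) * ((m : ℝ) + 1 - (k : ℝ)) := by
      have := Nat.choose_mul_succ_eq m k
      calc (m.choose k : ℝ) * ((m : ℝ) + 1) = ((m.choose k * (m + 1) : ℕ) : ℝ) := by push_cast; ring
        _ = (((m + 1).choose k * (m + 1 - k) : ℕ) : ℝ) := by rw [this]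
        _ = ((m + 1).choose k : ℝ) * ((m : ℝ) + 1 - (k : ℝ)) := by
              push_cast [Nat.cast_sub (by omega : k ≤ m + 1)]; ring
    rw [h1, pow_succ, pow_succ]
    linear_combination (-((-1 : ℝ) ^ (m - k))) * ((i : ℝ) + k) ^ n * hc
end
end

section
/- Let N ≥ 3, let F : ℝ → ℝ, and let 0 = x_1 < x_2 < ⋯ < x_N = 1 be a fixed configuration under F, with Δ = x_2 − x_1. For 2 ≤ i ≤ N−1 set Q_i = Δ²·Σ_{k=2}^{i} F(x_k). Then for every i = 2, …, N−1 one has 1 + Q_i > 0 and x_{i+1} − x_i = Δ·(1 + Q_i)^{−1/2}; equivalently, writing x_{i+1} − x_i = Δ(1 + δ_i), one has δ_i = (1 + Q_i)^{−1/2} − 1. -/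
open Finset

noncomputable section

/-- A fixed configuration of `N` points `0 = x 1 < x 2 < ⋯ < x N = 1` on `[0,1]`
under the external force `F`, with nearest-neighbour Coulomb repulsion `f r = r⁻².` -/
def IsFixedConfig (N : ℕ) (F : ℝ → ℝ) (x : ℕ → ℝ) : Prop :=
  x 1 = 0 ∧ x N = 1 ∧
  (∀ i, 1 ≤ i → i < N → x i < x (i + 1)) ∧
  (∀ i, 2 ≤ i → i ≤ N - 1 →
    1 / (x i - x (i - 1)) ^ 2 - 1 / (x (i + 1) - x i) ^ 2 + F (x i) = 0)

/-- For a fixed configuration under any external force `F`, with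
`Q_i = Δ² ∑_{k=2}^{i} F(x_k)`, one has `1 + Q_i > 0` and
`x_{i+1} − x_i = Δ (1 + Q_i)^{-1/2}` for `i = 2, …, N−1`. -/
theorem increments_of_fixed_config (N : ℕ) (hN : 3 ≤ N) (F : ℝ → ℝ)
    (x : ℕ → ℝ) (hx : IsFixedConfig N F x) :
    ∀ i : ℕ, 2 ≤ i → i ≤ N - 1 →
      0 < 1 + (x 2 - x 1) ^ 2 * ∑ k ∈ Finset.Icc 2 i, F (x k) ∧
      x (i + 1) - x i =
        (x 2 - x 1) *
          (1 + (x 2 - x 1) ^ 2 * ∑ k ∈ Finset.Icc 2 i, F (x k)) ^ (-(1 / 2) : ℝ) := by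

  obtain ⟨h0, h1, hmono, hforce⟩ := hx
  have hΔ : 0 < x 2 - x 1 := sub_pos.2 (hmono 1 le_rfl (by omega))
  have hgap : ∀ i, 1 ≤ i → i < N → 0 < x (i + 1) - x i :=
    fun i h1i h2i => sub_pos.2 (hmono i h1i h2i)
  have key : ∀ i, 2 ≤ i → i ≤ N - 1 →
      1 / (x (i + 1) - x i) ^ 2 = 1 / (x 2 - x 1) ^ 2 + ∑ k ∈ Finset.Icc 2 i, F (x k) := by
    intro i h2 hi
    induction i, h2 using Nat.le_induction with
    | base =>
      have hf := hforce 2 le_rfl hi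
      norm_num at hf ⊢
      linarith
    | succ n hn ih =>
      have ihv := ih (by omega)
      have hf := hforce (n + 1) (by omega) hi
      simp only [Nat.add_sub_cancel] at hf
      rw [Finset.sum_Icc_succ_top (by omega : 2 ≤ n + 1)]
      linarith
  intro i h2 hi
  have hk := key i h2 hi
  have hg : 0 < x (i + 1) - x i := hgap i (by omega) (by omega)
  set g := x (i + 1) - x i with hgdef
  have hQ : 1 + (x 2 - x 1) ^ 2 * ∑ k ∈ Finset.Icc 2 i, F (x k)
      = ((x 2 - x 1) / g) ^ 2 := by
    have hΔ' := hΔ.ne'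
    have hg' := hg.ne'
    field_simp
    field_simp at hk
    nlinarith [hk]
  constructor
  · rw [hQ]; positivity
  · rw [hQ]
    have hb : 0 < (x 2 - x 1) / g := div_pos hΔ hg
    have : (((x 2 - x 1) / g) ^ 2 : ℝ) ^ (-(1 / 2) : ℝ) = ((x 2 - x 1) / g)⁻¹ := by
      rw [← Real.rpow_natCast ((x 2 - x 1) / g) 2, ← Real.rpow_mul hb.le]
      norm_num [Real.rpow_neg_one]
    rw [this]
    field_simp
end
end

section
/- Let N, l, n be integers with l ≥ 3 and n ≥ 1, let Δ > 0 and C ≥ 1 be reals with (l−3)·Δ ≤ 1, and let x : {1, …, N} → ℝ satisfy: 0 ≤ x_i ≤ 1 for all i; |∇x_i| ≤ Δ whenever i + 1 ≤ N; and |∇^k x_i| ≤ Δ·(C·Δ)^k·k! for every k = 2, …, l−1 and every i with i + k ≤ N. Then for every i with i + l − 1 ≤ N, the (l−1)-st finite difference of the function i ↦ x_i^n satisfies |∇^{l−1}(x_i^n)| ≤ (C·Δ)^{l−1}·(l−1)!·n!·e^{2 + 1/C}. -/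
open Finset

noncomputable section

namespace FdiffAux

def fd (g : ℕ → ℝ) (i : ℕ) : ℝ := g (i + 1) - g i

def Dit : ℕ → (ℕ → ℝ) → ℕ → ℝ
  | 0, g => g
  | l + 1, g => Dit l (fd g)

lemma Dit_zero (g : ℕ → ℝ) (i : ℕ) : Dit 0 g i = g i := rfl

lemma Dit_succ (l : ℕ) (g : ℕ → ℝ) (i : ℕ) : Dit (l+1) g i = Dit l (fd g) i := rfl

lemma Dit_add (l : ℕ) : ∀ (f g : ℕ → ℝ) (i : ℕ),
    Dit l (fun t => f t + g t) i = Dit l f i + Dit l g i := by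
  induction l with
  | zero => intro f g i; rfl
  | succ l ih =>
    intro f g i
    rw [Dit_succ]
    have h : fd (fun t => f t + g t) = fun t => fd f t + fd g t := by
      funext t; simp only [fd]; ring
    rw [h, ih, Dit_succ, Dit_succ]

lemma Dit_shift (l : ℕ) : ∀ (g : ℕ → ℝ) (i : ℕ),
    Dit l (fun t => g (t+1)) i = Dit l g (i+1) := by
  induction l with
  | zero => intro g i; rfl
  | succ l ih =>
    intro g i
    rw [Dit_succ]
    have h : fd (fun t => g (t+1)) = fun t => fd g (t+1) := by
      funext t; simp only [fd]
    rw [h, ih, Dit_succ]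

lemma Dit_const (l : ℕ) : ∀ (c : ℝ) (i : ℕ), Dit (l+1) (fun _ => c) i = 0 := by
  induction l with
  | zero =>
    intro c i
    show fd (fun _ => c) i = 0
    simp [fd]
  | succ l ih =>
    intro c i
    rw [Dit_succ]
    have h : fd (fun _ => c) = fun _ => (0:ℝ) := by funext t; simp [fd]
    rw [h]
    exact ih 0 i

lemma Dit_succ_outer (l : ℕ) : ∀ (g : ℕ → ℝ) (i : ℕ),
    Dit (l+1) g i = Dit l g (i+1) - Dit l g i := by
  induction l with
  | zero => intro g i; rfl
  | succ l ih =>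
    intro g i
    rw [Dit_succ, ih, ← Dit_succ, ← Dit_succ]

lemma fdiff_succ (l : ℕ) (g : ℕ → ℝ) (i : ℕ) :
    fdiff (l+1) g i = fdiff l g (i+1) - fdiff l g i := by
  unfold fdiff
  rw [Finset.sum_range_succ' (fun k => (-1 : ℝ) ^ (l + 1 - k) * ((l+1).choose k : ℝ) * g (i + k))]
  have h1 : ∀ k ∈ Finset.range (l+1),
      (-1 : ℝ) ^ (l + 1 - (k+1)) * ((l+1).choose (k+1) : ℝ) * g (i + (k+1))
      = (-1 : ℝ) ^ (l - k) * (l.choose k : ℝ) * g (i + 1 + k)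
        + (-1 : ℝ) ^ (l - k) * (l.choose (k+1) : ℝ) * g (i + (k+1)) := by
    intro k hk
    have h2 : l + 1 - (k+1) = l - k := by omega
    have h3 : i + 1 + k = i + (k + 1) := by omega
    rw [h2, h3, Nat.choose_succ_succ]
    push_cast
    ring
  rw [Finset.sum_congr rfl h1, Finset.sum_add_distrib]
  have h4 : ∑ k ∈ Finset.range (l+1), (-1:ℝ) ^ (l - k) * (l.choose (k+1) : ℝ) * g (i + (k+1))
      = ∑ k ∈ Finset.range l, (-1:ℝ) ^ (l - k) * (l.choose (k+1) : ℝ) * g (i + (k+1)) := by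
    rw [Finset.sum_range_succ]
    simp [Nat.choose_succ_self]
  have h5 : ∑ k ∈ Finset.range (l+1), (-1:ℝ) ^ (l - k) * (l.choose k : ℝ) * g (i + k)
      = ∑ k ∈ Finset.range l, (-1:ℝ) ^ (l - (k+1)) * (l.choose (k+1) : ℝ) * g (i + (k+1))
        + (-1:ℝ) ^ l * (l.choose 0 : ℝ) * g (i + 0) := by
    exact Finset.sum_range_succ' _ l
  have h6 : ∀ k ∈ Finset.range l,
      (-1:ℝ) ^ (l - k) * (l.choose (k+1) : ℝ) * g (i + (k+1))
      = -((-1:ℝ) ^ (l - (k+1)) * (l.choose (k+1) : ℝ) * g (i + (k+1))) := by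
    intro k hk
    have : l - k = (l - (k+1)) + 1 := by
      simp at hk; omega
    rw [this, pow_succ]
    ring
  rw [h4, Finset.sum_congr rfl h6, Finset.sum_neg_distrib, h5]
  simp only [Nat.choose_zero_right, Nat.cast_one, add_zero, Nat.sub_zero, mul_one, one_mul]
  rw [pow_succ]
  ring

lemma fdiff_eq_Dit (l : ℕ) : ∀ (g : ℕ → ℝ) (i : ℕ), fdiff l g i = Dit l g i := by
  induction l with
  | zero => intro g i; simp [fdiff]; rfl
  | succ l ih =>
    intro g i
    rw [fdiff_succ, Dit_succ_outer, ih, ih]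


lemma Dit_leibniz (j : ℕ) : ∀ (f g : ℕ → ℝ) (i : ℕ),
    Dit j (fun t => f t * g t) i
      = ∑ k ∈ Finset.range (j+1), (j.choose k : ℝ) * Dit k f i * Dit (j-k) g (i+k) := by
  induction j with
  | zero => intro f g i; simp [Dit]
  | succ j ih =>
    intro f g i
    rw [Dit_succ]
    have hfd : fd (fun t => f t * g t) = fun t => fd f t * g (t+1) + f t * fd g t := by
      funext t; simp only [fd]; ring
    rw [hfd, Dit_add, ih (fd f) (fun t => g (t+1)) i, ih f (fd g) i]
    -- massage first sum
    have e1 : ∀ k ∈ Finset.range (j+1),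
        (j.choose k : ℝ) * Dit k (fd f) i * Dit (j-k) (fun t => g (t+1)) (i+k)
        = (j.choose k : ℝ) * Dit (k+1) f i * Dit (j-k) g (i+k+1) := by
      intro k hk
      rw [← Dit_succ, Dit_shift]
    -- massage second sum
    have e2 : ∀ k ∈ Finset.range (j+1),
        (j.choose k : ℝ) * Dit k f i * Dit (j-k) (fd g) (i+k)
        = (j.choose k : ℝ) * Dit k f i * Dit (j+1-k) g (i+k) := by
      intro k hk
      simp only [Finset.mem_range] at hk
      have : j + 1 - k = (j - k) + 1 := by omega
      rw [this, ← Dit_succ]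
    rw [Finset.sum_congr rfl e1, Finset.sum_congr rfl e2]
    -- now expand the target
    rw [Finset.sum_range_succ'
      (fun k => ((j+1).choose k : ℝ) * Dit k f i * Dit (j+1-k) g (i+k))]
    have e3 : ∀ k ∈ Finset.range (j+1),
        (((j+1).choose (k+1) : ℕ) : ℝ) * Dit (k+1) f i * Dit (j+1-(k+1)) g (i+(k+1))
        = (j.choose k : ℝ) * Dit (k+1) f i * Dit (j-k) g (i+k+1)
          + (j.choose (k+1) : ℝ) * Dit (k+1) f i * Dit (j-k) g (i+k+1) := by
      intro k hk
      have h2 : j + 1 - (k+1) = j - k := by omega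
      have h3 : i + (k+1) = i + k + 1 := by omega
      rw [h2, h3, Nat.choose_succ_succ]
      push_cast
      ring
    rw [Finset.sum_congr rfl e3, Finset.sum_add_distrib]
    -- second LHS sum peeled
    have e4 : ∑ k ∈ Finset.range (j+1), (j.choose k : ℝ) * Dit k f i * Dit (j+1-k) g (i+k)
        = ∑ k ∈ Finset.range j,
            (j.choose (k+1) : ℝ) * Dit (k+1) f i * Dit (j-k) g (i+k+1)
          + (j.choose 0 : ℝ) * Dit 0 f i * Dit (j+1) g i := by
      rw [Finset.sum_range_succ' (fun k => (j.choose k : ℝ) * Dit k f i * Dit (j+1-k) g (i+k))]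
      congr 1
      apply Finset.sum_congr rfl
      intro k hk
      simp only [Finset.mem_range] at hk
      have h2 : j + 1 - (k+1) = j - k := by omega
      have h3 : i + (k+1) = i + k + 1 := by omega
      rw [h2, h3]
    have e5 : ∑ k ∈ Finset.range (j+1), (j.choose (k+1) : ℝ) * Dit (k+1) f i * Dit (j-k) g (i+k+1)
        = ∑ k ∈ Finset.range j, (j.choose (k+1) : ℝ) * Dit (k+1) f i * Dit (j-k) g (i+k+1) := by
      rw [Finset.sum_range_succ]
      simp [Nat.choose_succ_self]
    rw [e4, e5]
    simp only [Nat.choose_zero_right, Nat.cast_one, one_mul, Nat.sub_zero, add_zero]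
    ring

def qq : ℕ → ℕ → ℕ
  | 0, s => if s = 0 then 1 else 0
  | b + 1, s => ∑ k ∈ Finset.Icc 2 s, qq b (s - k)

def hh (C Δ : ℝ) (k : ℕ) : ℝ := if k = 0 then 1 else if k = 1 then 1 / C else Δ

def Vv (C Δ : ℝ) (c j : ℕ) : ℝ :=
  ∑ a ∈ Finset.range (c + 1),
    (1 / C) ^ a * Δ ^ (c - a) * (qq (c - a) (j - a) : ℝ)
      / ((a.factorial : ℝ) * ((c - a).factorial : ℝ))

def Ss (C Δ : ℝ) (n j : ℕ) : ℝ :=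
  ∑ c ∈ Finset.range (j + 1), (n.descFactorial c : ℝ) * Vv C Δ c j

variable {C Δ : ℝ}

lemma Vv_nonneg (hC : 1 ≤ C) (hΔ : 0 ≤ Δ) (c j : ℕ) : 0 ≤ Vv C Δ c j := by
  apply Finset.sum_nonneg
  intro a _
  have h1 : (0:ℝ) ≤ 1 / C := by positivity
  positivity

lemma Ss_nonneg (hC : 1 ≤ C) (hΔ : 0 ≤ Δ) (n j : ℕ) : 0 ≤ Ss C Δ n j := by
  apply Finset.sum_nonneg
  intro c _
  exact mul_nonneg (by positivity) (Vv_nonneg hC hΔ c j)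

lemma hh_nonneg (hC : 1 ≤ C) (hΔ : 0 ≤ Δ) (k : ℕ) : 0 ≤ hh C Δ k := by
  unfold hh
  split_ifs
  · norm_num
  · positivity
  · exact hΔ

lemma descF_succ (n c : ℕ) :
    (n + 1).descFactorial c = n.descFactorial c + c * n.descFactorial (c - 1) := by
  cases c with
  | zero => simp
  | succ c =>
    rw [Nat.succ_descFactorial_succ, Nat.descFactorial_succ]
    rcases le_or_gt c n with h | h
    · have : n + 1 = (n - c) + (c + 1) := by omega
      rw [this, add_mul]
      simp
    · have h0 : n.descFactorial c = 0 := Nat.descFactorial_eq_zero_iff_lt.mpr h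
      simp [h0]

/-- The key per-`c` inequality. -/
lemma key_ineq (hC : 1 ≤ C) (hΔ : 0 ≤ Δ) (c J : ℕ) (hcJ : c ≤ J) :
    (1 / C) * Vv C Δ c J
      + ∑ k ∈ Finset.range J, (if c + k + 1 ≤ J then Δ * Vv C Δ c (J - 1 - k) else 0)
      ≤ ((c:ℝ) + 1) * Vv C Δ (c + 1) (J + 1) := by
  have hC0 : (0:ℝ) < C := lt_of_lt_of_le one_pos hC
  -- notation for the terms of Vv (c+1) (J+1)
  set T : ℕ → ℝ := fun a =>
    (1 / C) ^ a * Δ ^ (c + 1 - a) * (qq (c + 1 - a) (J + 1 - a) : ℝ)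
      / ((a.factorial : ℝ) * ((c + 1 - a).factorial : ℝ)) with hT
  have hsplit : ((c:ℝ) + 1) * Vv C Δ (c + 1) (J + 1)
      = (∑ a ∈ Finset.range (c + 2), (a : ℝ) * T a)
        + (∑ a ∈ Finset.range (c + 2), ((c + 1 - a : ℕ) : ℝ) * T a) := by
    rw [Vv, Finset.mul_sum, ← Finset.sum_add_distrib]
    apply Finset.sum_congr rfl
    intro a ha
    simp only [Finset.mem_range] at ha
    have : ((c + 1 - a : ℕ) : ℝ) = (c:ℝ) + 1 - (a:ℝ) := by
      have : a ≤ c + 1 := by omega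
      push_cast [this]; ring
    rw [this, hT]
    ring
  -- the A part
  have hA : (∑ a ∈ Finset.range (c + 2), (a : ℝ) * T a) = (1 / C) * Vv C Δ c J := by
    rw [Finset.sum_range_succ' (fun a => (a:ℝ) * T a), Vv, Finset.mul_sum]
    simp only [Nat.cast_zero, zero_mul, add_zero]
    apply Finset.sum_congr rfl
    intro a ha
    simp only [Finset.mem_range] at ha
    have h1 : c + 1 - (a + 1) = c - a := by omega
    have h2 : J + 1 - (a + 1) = J - a := by omega
    rw [hT]
    simp only [h1, h2]
    rw [pow_succ, Nat.factorial_succ]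
    have hf1 : ((a.factorial : ℝ)) ≠ 0 := by positivity
    have hf2 : (((c - a).factorial : ℝ)) ≠ 0 := by positivity
    push_cast
    field_simp
  -- the B part
  set W : ℕ → ℕ → ℝ := fun a k =>
    (1 / C) ^ a * Δ ^ (c + 1 - a) * (qq (c - a) (J + 1 - a - k) : ℝ)
      / ((a.factorial : ℝ) * ((c - a).factorial : ℝ)) with hW
  have hWnn : ∀ a k, 0 ≤ W a k := by
    intro a k
    rw [hW]
    have h1 : (0:ℝ) ≤ 1 / C := by positivity
    positivity
  have hB : (∑ a ∈ Finset.range (c + 2), ((c + 1 - a : ℕ) : ℝ) * T a)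
      = ∑ a ∈ Finset.range (c + 1), ∑ k ∈ Finset.Icc 2 (J + 1 - a), W a k := by
    rw [Finset.sum_range_succ]
    simp only [Nat.sub_self, Nat.cast_zero, zero_mul, add_zero]
    apply Finset.sum_congr rfl
    intro a ha
    simp only [Finset.mem_range] at ha
    have h1 : c + 1 - a = (c - a) + 1 := by omega
    rw [hT]
    simp only [h1]
    rw [show qq ((c - a) + 1) (J + 1 - a) = ∑ k ∈ Finset.Icc 2 (J + 1 - a), qq (c - a) (J + 1 - a - k) from rfl]
    push_cast
    rw [Finset.mul_sum, Finset.sum_div, Finset.mul_sum]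
    apply Finset.sum_congr rfl
    intro k hk
    simp only [hW]
    rw [h1, Nat.factorial_succ]
    have hf1 : ((a.factorial : ℝ)) ≠ 0 := by positivity
    have hf2 : (((c - a).factorial : ℝ)) ≠ 0 := by positivity
    push_cast
    field_simp
  rw [hsplit, hA]
  apply add_le_add_right
  rw [hB]
  -- rewrite LHS double sum
  have hL : ∑ k ∈ Finset.range J, (if c + k + 1 ≤ J then Δ * Vv C Δ c (J - 1 - k) else 0)
      = ∑ a ∈ Finset.range (c + 1), ∑ k ∈ Finset.range J,
          (if c + k + 1 ≤ J then W a (k + 2) else 0) := by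
    rw [Finset.sum_comm]
    apply Finset.sum_congr rfl
    intro k _
    split_ifs with h
    · rw [Vv, Finset.mul_sum]
      apply Finset.sum_congr rfl
      intro a ha
      simp only [Finset.mem_range] at ha
      have h1 : J - 1 - k - a = J + 1 - a - (k + 2) := by omega
      have h2 : c + 1 - a = (c - a) + 1 := by omega
      simp only [hW]
      rw [h1, h2, pow_succ]
      ring
    · simp
  rw [hL]
  apply Finset.sum_le_sum
  intro a ha
  simp only [Finset.mem_range] at ha
  -- reindex RHS inner sum
  have hR : ∑ k ∈ Finset.Icc 2 (J + 1 - a), W a k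
      = ∑ k ∈ Finset.range (J + 1 - a + 1 - 2), W a (2 + k) := by
    rw [← Finset.Ico_add_one_right_eq_Icc, Finset.sum_Ico_eq_sum_range]
  have hJa : J + 1 - a + 1 - 2 = J - a := by omega
  rw [hR, hJa]
  calc ∑ k ∈ Finset.range J, (if c + k + 1 ≤ J then W a (k + 2) else 0)
      ≤ ∑ k ∈ Finset.range J, (if k < J - a then W a (k + 2) else 0) := by
        apply Finset.sum_le_sum
        intro k _
        split_ifs with h1 h2
        · exact le_rfl
        · exact absurd (by omega : k < J - a) h2
        · exact hWnn a (k + 2)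
        · exact le_rfl
    _ = ∑ k ∈ Finset.range (J - a), W a (2 + k) := by
        have hsub : Finset.range (J - a) ⊆ Finset.range J := Finset.range_subset_range.mpr (by omega)
        have h1 : ∑ k ∈ Finset.range (J - a), (if k < J - a then W a (k + 2) else 0)
            = ∑ k ∈ Finset.range J, (if k < J - a then W a (k + 2) else 0) := by
          apply Finset.sum_subset hsub
          intro k _ hk
          simp only [Finset.mem_range, not_lt] at hk
          rw [if_neg (by omega)]
        rw [← h1]
        apply Finset.sum_congr rfl
        intro k hk
        simp only [Finset.mem_range] at hk
        rw [if_pos hk, show k + 2 = 2 + k from by omega]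

/-- The convolution recursion bound. -/
lemma S_rec (hC : 1 ≤ C) (hΔ : 0 ≤ Δ) (n j : ℕ) :
    ∑ k ∈ Finset.range (j + 1), hh C Δ k * Ss C Δ n (j - k) ≤ Ss C Δ (n + 1) j := by
  cases j with
  | zero =>
    simp [Ss, Vv, hh, qq]
  | succ J =>
    -- expand LHS
    rw [Finset.sum_range_succ' (fun k => hh C Δ k * Ss C Δ n (J + 1 - k)),
      Finset.sum_range_succ' (fun k => hh C Δ (k + 1) * Ss C Δ n (J + 1 - (k + 1)))]
    have e1 : ∀ k ∈ Finset.range J,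
        hh C Δ (k + 1 + 1) * Ss C Δ n (J + 1 - (k + 1 + 1))
          = Δ * Ss C Δ n (J - 1 - k) := by
      intro k _
      have h1 : J + 1 - (k + 1 + 1) = J - 1 - k := by omega
      have h2 : hh C Δ (k + 1 + 1) = Δ := by unfold hh; norm_num
      rw [h1, h2]
    rw [Finset.sum_congr rfl e1]
    have e2 : hh C Δ (0 + 1) * Ss C Δ n (J + 1 - (0 + 1)) = (1 / C) * Ss C Δ n J := by
      norm_num [hh]
    have e3 : hh C Δ 0 * Ss C Δ n (J + 1 - 0) = Ss C Δ n (J + 1) := by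
      norm_num [hh]
    rw [e2, e3]
    -- expand RHS
    have eR : Ss C Δ (n + 1) (J + 1)
        = Ss C Δ n (J + 1)
          + ∑ c ∈ Finset.range (J + 1), ((c:ℝ) + 1) * (n.descFactorial c : ℝ) * Vv C Δ (c + 1) (J + 1) := by
      rw [Ss, Ss]
      have : ∀ c ∈ Finset.range (J + 2),
          ((n + 1).descFactorial c : ℝ) * Vv C Δ c (J + 1)
            = (n.descFactorial c : ℝ) * Vv C Δ c (J + 1)
              + (c : ℝ) * (n.descFactorial (c - 1) : ℝ) * Vv C Δ c (J + 1) := by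
        intro c _
        rw [descF_succ]
        push_cast
        ring
      rw [Finset.sum_congr rfl this, Finset.sum_add_distrib]
      congr 1
      rw [Finset.sum_range_succ' (fun c => (c:ℝ) * (n.descFactorial (c - 1) : ℝ) * Vv C Δ c (J + 1))]
      simp only [Nat.cast_zero, zero_mul, add_zero]
      apply Finset.sum_congr rfl
      intro c _
      push_cast
      ring_nf
    rw [eR]
    -- reduce to key inequality
    have goal2 : (1 / C) * Ss C Δ n J + ∑ k ∈ Finset.range J, Δ * Ss C Δ n (J - 1 - k)
        ≤ ∑ c ∈ Finset.range (J + 1), ((c:ℝ) + 1) * (n.descFactorial c : ℝ) * Vv C Δ (c + 1) (J + 1) := by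
      -- expand LHS sums over c
      have hL1 : (1 / C) * Ss C Δ n J
          = ∑ c ∈ Finset.range (J + 1), (n.descFactorial c : ℝ) * ((1 / C) * Vv C Δ c J) := by
        rw [Ss, Finset.mul_sum]
        apply Finset.sum_congr rfl
        intro c _
        ring
      have hL2 : ∑ k ∈ Finset.range J, Δ * Ss C Δ n (J - 1 - k)
          = ∑ c ∈ Finset.range (J + 1), (n.descFactorial c : ℝ)
              * ∑ k ∈ Finset.range J, (if c + k + 1 ≤ J then Δ * Vv C Δ c (J - 1 - k) else 0) := by
        have step1 : ∀ k ∈ Finset.range J,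
            Δ * Ss C Δ n (J - 1 - k)
              = ∑ c ∈ Finset.range (J + 1),
                  (if c + k + 1 ≤ J then (n.descFactorial c : ℝ) * (Δ * Vv C Δ c (J - 1 - k)) else 0) := by
          intro k hk
          simp only [Finset.mem_range] at hk
          rw [Ss, Finset.mul_sum]
          rw [← Finset.sum_subset (Finset.range_subset_range.mpr (by omega : J - 1 - k + 1 ≤ J + 1))]
          · apply Finset.sum_congr rfl
            intro c hc
            simp only [Finset.mem_range] at hc
            rw [if_pos (by omega)]
            ring
          · intro c _ hc
            simp only [Finset.mem_range, not_lt] at hc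
            rw [if_neg (by omega)]
        rw [Finset.sum_congr rfl step1, Finset.sum_comm]
        apply Finset.sum_congr rfl
        intro c _
        rw [Finset.mul_sum]
        apply Finset.sum_congr rfl
        intro k _
        split_ifs
        · rfl
        · ring
      rw [hL1, hL2, ← Finset.sum_add_distrib]
      apply Finset.sum_le_sum
      intro c hc
      simp only [Finset.mem_range] at hc
      rw [← mul_add]
      have := key_ineq hC hΔ c J (by omega)
      calc (n.descFactorial c : ℝ)
            * ((1 / C) * Vv C Δ c J
               + ∑ k ∈ Finset.range J, (if c + k + 1 ≤ J then Δ * Vv C Δ c (J - 1 - k) else 0))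
          ≤ (n.descFactorial c : ℝ) * (((c:ℝ) + 1) * Vv C Δ (c + 1) (J + 1)) := by
            apply mul_le_mul_of_nonneg_left this (by positivity)
        _ = ((c:ℝ) + 1) * (n.descFactorial c : ℝ) * Vv C Δ (c + 1) (J + 1) := by ring
    linarith [goal2]


lemma fdiff_zero (g : ℕ → ℝ) (i : ℕ) : fdiff 0 g i = g i := by
  simp [fdiff]

variable {C Δ : ℝ} -- dummy

/-- Main inductive claim: pointwise bound on `fdiff j (x ^ n)`. -/
lemma claimA (C Δ : ℝ) (hC : 1 ≤ C) (hΔ : 0 ≤ Δ) (N m : ℕ) (x : ℕ → ℝ)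
    (hbnd : ∀ k, k ≤ m → ∀ i, 1 ≤ i → i + k ≤ N →
      |fdiff k x i| ≤ (C * Δ) ^ k * (k.factorial : ℝ) * hh C Δ k) :
    ∀ n j i, j ≤ m → 1 ≤ i → i + j ≤ N →
      |fdiff j (fun t => x t ^ n) i| ≤ (C * Δ) ^ j * (j.factorial : ℝ) * Ss C Δ n j := by
  have hCD : (0:ℝ) ≤ C * Δ := mul_nonneg (le_trans zero_le_one hC) hΔ
  intro n
  induction n with
  | zero =>
    intro j i hj hi hiN
    have hx0 : (fun t => x t ^ 0) = fun _ => (1:ℝ) := by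
      funext t; rw [pow_zero]
    rw [hx0]
    cases j with
    | zero =>
      rw [fdiff_zero]
      have : Ss C Δ 0 0 = 1 := by simp [Ss, Vv, qq]
      rw [this]
      simp
    | succ j =>
      rw [fdiff_eq_Dit, Dit_const]
      simp only [abs_zero]
      have h1 : 0 ≤ Ss C Δ 0 (j+1) := Ss_nonneg hC hΔ 0 (j+1)
      positivity
  | succ n ih =>
    intro j i hj hi hiN
    have hps : (fun t => x t ^ (n+1)) = fun t => x t * x t ^ n := by
      funext t; rw [pow_succ']
    rw [hps, fdiff_eq_Dit, Dit_leibniz]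
    calc |∑ k ∈ Finset.range (j+1), (j.choose k : ℝ) * Dit k x i * Dit (j-k) (fun t => x t ^ n) (i+k)|
        ≤ ∑ k ∈ Finset.range (j+1), |(j.choose k : ℝ) * Dit k x i * Dit (j-k) (fun t => x t ^ n) (i+k)| :=
          Finset.abs_sum_le_sum_abs _ _
      _ ≤ ∑ k ∈ Finset.range (j+1),
            (j.choose k : ℝ) * ((C * Δ) ^ k * (k.factorial : ℝ) * hh C Δ k)
              * ((C * Δ) ^ (j-k) * ((j-k).factorial : ℝ) * Ss C Δ n (j-k)) := by
          apply Finset.sum_le_sum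
          intro k hk
          simp only [Finset.mem_range] at hk
          have hk' : k ≤ j := by omega
          rw [abs_mul, abs_mul]
          have hb1 : |Dit k x i| ≤ (C * Δ) ^ k * (k.factorial : ℝ) * hh C Δ k := by
            rw [← fdiff_eq_Dit]
            exact hbnd k (le_trans hk' hj) i hi (by omega)
          have hb2 : |Dit (j-k) (fun t => x t ^ n) (i+k)|
              ≤ (C * Δ) ^ (j-k) * ((j-k).factorial : ℝ) * Ss C Δ n (j-k) := by
            rw [← fdiff_eq_Dit]
            exact ih (j-k) (i+k) (le_trans (Nat.sub_le _ _) hj) (by omega) (by omega)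
          have hc : |(j.choose k : ℝ)| = (j.choose k : ℝ) := abs_of_nonneg (by positivity)
          rw [hc]
          apply mul_le_mul
          · apply mul_le_mul_of_nonneg_left hb1 (by positivity)
          · exact hb2
          · exact abs_nonneg _
          · have := hh_nonneg hC hΔ k
            positivity
      _ = (C * Δ) ^ j * (j.factorial : ℝ)
            * ∑ k ∈ Finset.range (j+1), hh C Δ k * Ss C Δ n (j-k) := by
          rw [Finset.mul_sum]
          apply Finset.sum_congr rfl
          intro k hk
          simp only [Finset.mem_range] at hk
          have hk' : k ≤ j := by omega
          have hfac : (j.choose k : ℝ) * (k.factorial : ℝ) * ((j-k).factorial : ℝ)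
              = (j.factorial : ℝ) := by
            rw [← Nat.cast_mul, ← Nat.cast_mul, Nat.choose_mul_factorial_mul_factorial hk']
          have hpow : (C * Δ) ^ k * (C * Δ) ^ (j-k) = (C * Δ) ^ j := by
            rw [← pow_add]
            congr 1
            omega
          calc (j.choose k : ℝ) * ((C * Δ) ^ k * (k.factorial : ℝ) * hh C Δ k)
                * ((C * Δ) ^ (j-k) * ((j-k).factorial : ℝ) * Ss C Δ n (j-k))
              = ((j.choose k : ℝ) * (k.factorial : ℝ) * ((j-k).factorial : ℝ))
                * ((C * Δ) ^ k * (C * Δ) ^ (j-k)) * (hh C Δ k * Ss C Δ n (j-k)) := by ring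
            _ = (j.factorial : ℝ) * (C * Δ) ^ j * (hh C Δ k * Ss C Δ n (j-k)) := by
                rw [hfac, hpow]
            _ = (C * Δ) ^ j * (j.factorial : ℝ) * (hh C Δ k * Ss C Δ n (j-k)) := by ring
      _ ≤ (C * Δ) ^ j * (j.factorial : ℝ) * Ss C Δ (n+1) j := by
          apply mul_le_mul_of_nonneg_left (S_rec hC hΔ n j) (by positivity)

/-- bound for the composition count. -/
lemma qq_succ_le (b : ℕ) : ∀ s, qq (b+1) s ≤ if 2*(b+1) ≤ s then (s-2)^b else 0 := by
  induction b with
  | zero =>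
    intro s
    show (∑ k ∈ Finset.Icc 2 s, qq 0 (s-k)) ≤ _
    rcases le_or_gt 2 s with hs | hs
    · rw [if_pos (by omega)]
      have h1 : ∀ k ∈ Finset.Icc 2 s, qq 0 (s-k) ≤ (if k = s then 1 else 0) := by
        intro k hk
        simp only [Finset.mem_Icc] at hk
        show (if s - k = 0 then 1 else 0) ≤ _
        split_ifs with h1 h2
        · exact le_rfl
        · exact absurd (by omega : k = s) h2
        · exact Nat.zero_le _
        · exact le_rfl
      calc ∑ k ∈ Finset.Icc 2 s, qq 0 (s-k) ≤ ∑ k ∈ Finset.Icc 2 s, (if k = s then 1 else 0) :=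
            Finset.sum_le_sum h1
        _ = if s ∈ Finset.Icc 2 s then 1 else 0 := by
            rw [Finset.sum_ite_eq' (Finset.Icc 2 s) s (fun _ => 1)]
        _ ≤ 1 := by split_ifs <;> simp
        _ = (s-2)^0 := by rw [pow_zero]
    · rw [if_neg (by omega)]
      have : Finset.Icc 2 s = ∅ := Finset.Icc_eq_empty (by omega)
      simp [this]
  | succ b ih =>
    intro s
    show (∑ k ∈ Finset.Icc 2 s, qq (b+1) (s-k)) ≤ _
    rcases le_or_gt (2*(b+1+1)) s with hs | hs
    · rw [if_pos hs]
      calc ∑ k ∈ Finset.Icc 2 s, qq (b+1) (s-k)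
          ≤ ∑ k ∈ Finset.Icc 2 s, (if 2*(b+1) ≤ s-k then (s-2)^b else 0) := by
            apply Finset.sum_le_sum
            intro k hk
            refine le_trans (ih (s-k)) ?_
            split_ifs with h1
            · exact Nat.pow_le_pow_left (by omega) b
            · exact le_rfl
        _ = ∑ k ∈ (Finset.Icc 2 s).filter (fun k => 2*(b+1) ≤ s - k), (s-2)^b :=
            (Finset.sum_filter _ _).symm
        _ ≤ ∑ k ∈ Finset.Icc 2 (s - 2*(b+1)), (s-2)^b := by
            apply Finset.sum_le_sum_of_subset
            intro k hk
            simp only [Finset.mem_filter, Finset.mem_Icc] at hk ⊢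
            omega
        _ = (s - 2*(b+1) + 1 - 2) * (s-2)^b := by
            rw [Finset.sum_const, Nat.card_Icc, smul_eq_mul]
        _ ≤ (s-2) * (s-2)^b := by
            apply Nat.mul_le_mul_right
            omega
        _ = (s-2)^(b+1) := by rw [← pow_succ']
    · rw [if_neg (by omega)]
      have h0 : ∀ k ∈ Finset.Icc 2 s, qq (b+1) (s-k) ≤ 0 := by
        intro k hk
        simp only [Finset.mem_Icc] at hk
        refine le_trans (ih (s-k)) ?_
        rw [if_neg (by omega)]
      calc ∑ k ∈ Finset.Icc 2 s, qq (b+1) (s-k) ≤ ∑ k ∈ Finset.Icc 2 s, 0 :=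
            Finset.sum_le_sum h0
        _ = 0 := Finset.sum_const_zero

lemma qq_zero_le (s : ℕ) : qq 0 s ≤ 1 := by
  show (if s = 0 then 1 else 0) ≤ 1
  split_ifs <;> omega

lemma descF_le_factorial (n c : ℕ) : n.descFactorial c ≤ n.factorial := by
  rcases le_or_gt c n with h | h
  · rw [Nat.descFactorial_eq_div h]
    exact Nat.div_le_self _ _
  · rw [Nat.descFactorial_eq_zero_iff_lt.mpr h]
    exact Nat.zero_le _

/-- Final numeric bound on `Ss`. -/
lemma Ss_le {C Δ : ℝ} (hC : 1 ≤ C) (hΔ0 : 0 ≤ Δ) (hΔ1 : Δ ≤ 1) (m n : ℕ) (hm2 : 2 ≤ m)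
    (hm : ((m:ℝ) - 2) * Δ ≤ 1) :
    Ss C Δ n m ≤ (n.factorial : ℝ) * Real.exp (2 + 1/C) := by
  have hC0 : (0:ℝ) < C := lt_of_lt_of_le one_pos hC
  set gg : ℕ → ℝ := fun b => if b = 0 then 1 else Δ / (b.factorial : ℝ) with hgg
  have hggnn : ∀ b, 0 ≤ gg b := by
    intro b
    simp only [hgg]
    split_ifs
    · norm_num
    · positivity
  have hVle : ∀ c, c ≤ m → Vv C Δ c m
      ≤ ∑ a ∈ Finset.range (c+1), (1/C)^a / (a.factorial : ℝ) * gg (c-a) := by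
    intro c hc
    apply Finset.sum_le_sum
    intro a ha
    simp only [Finset.mem_range] at ha
    rcases Nat.eq_zero_or_pos (c - a) with hb | hb
    · rw [hb]
      have hq : ((qq 0 (m-a) : ℕ) : ℝ) ≤ 1 := by
        exact_mod_cast qq_zero_le (m-a)
      have : gg 0 = 1 := by simp [hgg]
      rw [this]
      calc (1/C)^a * Δ^0 * (qq 0 (m-a) : ℝ) / ((a.factorial:ℝ) * ((0:ℕ).factorial : ℝ))
          = ((1/C)^a / (a.factorial:ℝ)) * (qq 0 (m-a) : ℝ) := by
            rw [pow_zero, Nat.factorial_zero]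
            push_cast
            ring
        _ ≤ ((1/C)^a / (a.factorial:ℝ)) * 1 := by
            apply mul_le_mul_of_nonneg_left hq (by positivity)
        _ = (1/C)^a / (a.factorial:ℝ) * 1 := by ring
    · obtain ⟨b, hbeq⟩ : ∃ b, c - a = b + 1 := ⟨c - a - 1, by omega⟩
      rw [hbeq]
      have hgb : gg (b+1) = Δ / ((b+1).factorial : ℝ) := by
        simp [hgg]
      rw [hgb]
      have hq := qq_succ_le b (m-a)
      rcases le_or_gt (2*(b+1)) (m-a) with hg | hg
      · rw [if_pos hg] at hq
        have hqr : ((qq (b+1) (m-a) : ℕ) : ℝ) ≤ ((m-a-2)^b : ℕ) := by exact_mod_cast hq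
        have hcast : (((m-a-2)^b : ℕ) : ℝ) = (((m-a-2 : ℕ)):ℝ)^b := by push_cast; ring
        have hkey : Δ^(b+1) * ((qq (b+1) (m-a) : ℕ) : ℝ) ≤ Δ := by
          calc Δ^(b+1) * ((qq (b+1) (m-a) : ℕ) : ℝ)
              ≤ Δ^(b+1) * (((m-a-2 : ℕ)):ℝ)^b := by
                rw [← hcast]
                apply mul_le_mul_of_nonneg_left hqr (by positivity)
            _ = Δ * (Δ * ((m-a-2 : ℕ):ℝ))^b := by
                rw [pow_succ', mul_pow]
                ring
            _ ≤ Δ * 1 := by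
                refine mul_le_mul_of_nonneg_left ?_ hΔ0
                apply pow_le_one₀ (by positivity)
                calc Δ * ((m-a-2 : ℕ):ℝ) ≤ Δ * ((m:ℝ) - 2) := by
                      refine mul_le_mul_of_nonneg_left ?_ hΔ0
                      have h1 : (m-a-2 : ℕ) ≤ m - 2 := by omega
                      calc ((m-a-2 : ℕ):ℝ) ≤ ((m - 2 : ℕ):ℝ) := by exact_mod_cast h1
                        _ = (m:ℝ) - 2 := by
                            rw [Nat.cast_sub hm2]
                            norm_num
                  _ = ((m:ℝ) - 2) * Δ := by ring
                  _ ≤ 1 := hm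
            _ = Δ := mul_one Δ
        calc (1/C)^a * Δ^(b+1) * (qq (b+1) (m-a) : ℝ) / ((a.factorial:ℝ) * ((b+1).factorial : ℝ))
            = ((1/C)^a / (a.factorial:ℝ)) * ((Δ^(b+1) * (qq (b+1) (m-a) : ℝ)) / ((b+1).factorial : ℝ)) := by
              ring
          _ ≤ ((1/C)^a / (a.factorial:ℝ)) * (Δ / ((b+1).factorial : ℝ)) := by
              refine mul_le_mul_of_nonneg_left ?_ (by positivity)
              exact div_le_div_of_nonneg_right hkey (by positivity)
      · rw [if_neg (by omega)] at hq
        have hq0 : qq (b+1) (m-a) = 0 := by omega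
        rw [hq0]
        simp only [Nat.cast_zero, mul_zero, zero_div]
        positivity
  -- combine
  have step1 : Ss C Δ n m ≤ (n.factorial : ℝ)
      * ∑ c ∈ Finset.range (m+1), ∑ a ∈ Finset.range (c+1), (1/C)^a / (a.factorial : ℝ) * gg (c-a) := by
    rw [Ss, Finset.mul_sum]
    apply Finset.sum_le_sum
    intro c hc
    simp only [Finset.mem_range] at hc
    have h1 : (n.descFactorial c : ℝ) ≤ (n.factorial : ℝ) := by
      exact_mod_cast descF_le_factorial n c
    exact mul_le_mul h1 (hVle c (by omega)) (Vv_nonneg hC hΔ0 c m) (Nat.cast_nonneg _)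
  have step2 : ∑ c ∈ Finset.range (m+1), ∑ a ∈ Finset.range (c+1), (1/C)^a / (a.factorial : ℝ) * gg (c-a)
      ≤ (∑ a ∈ Finset.range (m+1), (1/C)^a / (a.factorial : ℝ)) * (∑ b ∈ Finset.range (m+1), gg b) := by
    have h1 : ∀ c ∈ Finset.range (m+1),
        ∑ a ∈ Finset.range (c+1), (1/C)^a / (a.factorial : ℝ) * gg (c-a)
        = ∑ a ∈ Finset.range (m+1), (if a ≤ c then (1/C)^a / (a.factorial : ℝ) * gg (c-a) else 0) := by
      intro c hc
      simp only [Finset.mem_range] at hc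
      calc ∑ a ∈ Finset.range (c+1), (1/C)^a / (a.factorial : ℝ) * gg (c-a)
          = ∑ a ∈ Finset.range (c+1),
              (if a ≤ c then (1/C)^a / (a.factorial : ℝ) * gg (c-a) else 0) := by
            apply Finset.sum_congr rfl
            intro a ha
            simp only [Finset.mem_range] at ha
            rw [if_pos (by omega)]
        _ = ∑ a ∈ Finset.range (m+1),
              (if a ≤ c then (1/C)^a / (a.factorial : ℝ) * gg (c-a) else 0) := by
            apply Finset.sum_subset (Finset.range_subset_range.mpr (by omega : c + 1 ≤ m + 1))
            intro a _ ha
            simp only [Finset.mem_range, not_lt] at ha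
            rw [if_neg (by omega)]
    rw [Finset.sum_congr rfl h1, Finset.sum_comm, Finset.sum_mul]
    apply Finset.sum_le_sum
    intro a ha
    simp only [Finset.mem_range] at ha
    have h2 : ∑ c ∈ Finset.range (m+1), (if a ≤ c then (1/C)^a / (a.factorial : ℝ) * gg (c-a) else 0)
        = ((1/C)^a / (a.factorial : ℝ)) * ∑ c ∈ Finset.range (m+1), (if a ≤ c then gg (c-a) else 0) := by
      rw [Finset.mul_sum]
      apply Finset.sum_congr rfl
      intro c _
      split_ifs
      · rfl
      · ring
    rw [h2]
    refine mul_le_mul_of_nonneg_left ?_ (by positivity)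
    -- ∑ c ite ≤ ∑ b gg b
    have h3 : ∑ c ∈ Finset.range (m+1), (if a ≤ c then gg (c-a) else 0)
        = ∑ c ∈ Finset.Ico a (m+1), gg (c-a) := by
      have hsub : Finset.Ico a (m+1) ⊆ Finset.range (m+1) := by
        intro t ht
        simp only [Finset.mem_Ico] at ht
        simp only [Finset.mem_range]
        omega
      calc ∑ c ∈ Finset.range (m+1), (if a ≤ c then gg (c-a) else 0)
          = ∑ c ∈ Finset.Ico a (m+1), (if a ≤ c then gg (c-a) else 0) := by
            symm
            apply Finset.sum_subset hsub
            intro c hc hc2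
            simp only [Finset.mem_range] at hc
            simp only [Finset.mem_Ico, not_and, not_lt] at hc2
            rw [if_neg (by omega)]
        _ = ∑ c ∈ Finset.Ico a (m+1), gg (c-a) := by
            apply Finset.sum_congr rfl
            intro c hc
            simp only [Finset.mem_Ico] at hc
            rw [if_pos (by omega)]
    rw [h3, Finset.sum_Ico_eq_sum_range]
    have h4 : ∀ i ∈ Finset.range (m + 1 - a), gg (a + i - a) = gg i := by
      intro i _
      congr 1
      omega
    rw [Finset.sum_congr rfl h4]
    apply Finset.sum_le_sum_of_subset_of_nonneg (Finset.range_subset_range.mpr (by omega))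
    intro b _ _
    exact hggnn b
  have step3 : (∑ a ∈ Finset.range (m+1), (1/C)^a / (a.factorial : ℝ)) ≤ Real.exp (1/C) :=
    Real.sum_le_exp_of_nonneg (by positivity) (m+1)
  have step4 : (∑ b ∈ Finset.range (m+1), gg b) ≤ Real.exp 1 := by
    calc ∑ b ∈ Finset.range (m+1), gg b ≤ ∑ b ∈ Finset.range (m+1), (1:ℝ)^b / (b.factorial : ℝ) := by
          apply Finset.sum_le_sum
          intro b _
          simp only [hgg]
          split_ifs with h
          · subst h; norm_num [Nat.factorial]
          · rw [one_pow]
            exact div_le_div_of_nonneg_right hΔ1 (by positivity)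
      _ ≤ Real.exp 1 := Real.sum_le_exp_of_nonneg zero_le_one (m+1)
  have hnn1 : (0:ℝ) ≤ ∑ a ∈ Finset.range (m+1), (1/C)^a / (a.factorial : ℝ) := by
    apply Finset.sum_nonneg; intro a _; positivity
  have hnn2 : (0:ℝ) ≤ ∑ b ∈ Finset.range (m+1), gg b := Finset.sum_nonneg fun b _ => hggnn b
  calc Ss C Δ n m ≤ (n.factorial : ℝ)
        * ∑ c ∈ Finset.range (m+1), ∑ a ∈ Finset.range (c+1), (1/C)^a / (a.factorial : ℝ) * gg (c-a) :=
        step1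
    _ ≤ (n.factorial : ℝ) * ((∑ a ∈ Finset.range (m+1), (1/C)^a / (a.factorial : ℝ))
          * (∑ b ∈ Finset.range (m+1), gg b)) := by
        apply mul_le_mul_of_nonneg_left step2 (by positivity)
    _ ≤ (n.factorial : ℝ) * (Real.exp (1/C) * Real.exp 1) := by
        refine mul_le_mul_of_nonneg_left ?_ (by positivity)
        exact mul_le_mul step3 step4 hnn2 (le_of_lt (Real.exp_pos _))
    _ ≤ (n.factorial : ℝ) * Real.exp (2 + 1/C) := by
        refine mul_le_mul_of_nonneg_left ?_ (by positivity)
        rw [← Real.exp_add]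
        apply Real.exp_le_exp.mpr
        linarith
  
lemma two_pow_le_fac (j : ℕ) (hj : 1 ≤ j) : (2:ℕ)^j ≤ 2 * j.factorial := by
  induction j with
  | zero => omega
  | succ j ih =>
    rcases Nat.eq_zero_or_pos j with h | h
    · subst h; simp [Nat.factorial]
    · calc (2:ℕ)^(j+1) = 2 * 2^j := by ring
        _ ≤ 2 * (2 * j.factorial) := by
            apply Nat.mul_le_mul_left
            exact ih h
        _ ≤ 2 * ((j+1) * j.factorial) := by
            apply Nat.mul_le_mul_left
            apply Nat.mul_le_mul_right
            omega
        _ = 2 * (j+1).factorial := by rw [Nat.factorial_succ]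

lemma fdiff_abs_le_two_pow (g : ℕ → ℝ) (j i : ℕ) (hg : ∀ k, k ≤ j → |g (i+k)| ≤ 1) :
    |fdiff j g i| ≤ 2^j := by
  calc |fdiff j g i| ≤ ∑ k ∈ Finset.range (j+1), |(-1 : ℝ) ^ (j - k) * (j.choose k : ℝ) * g (i + k)| :=
        Finset.abs_sum_le_sum_abs _ _
    _ ≤ ∑ k ∈ Finset.range (j+1), (j.choose k : ℝ) := by
        apply Finset.sum_le_sum
        intro k hk
        simp only [Finset.mem_range] at hk
        rw [abs_mul, abs_mul, abs_pow, abs_neg, abs_one, one_pow, one_mul,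
          Nat.abs_cast]
        calc (j.choose k : ℝ) * |g (i+k)| ≤ (j.choose k : ℝ) * 1 :=
              mul_le_mul_of_nonneg_left (hg k (by omega)) (by positivity)
          _ = (j.choose k : ℝ) := mul_one _
    _ = 2^j := by
        rw [← Nat.cast_sum]
        rw [Nat.sum_range_choose]
        push_cast
        ring

end FdiffAux

open FdiffAux in
/-- Inductive bound for finite differences of the power `x_i^n`: if `0 ≤ x_i ≤ 1`,
`|∇ x_i| ≤ Δ` and `|∇^k x_i| ≤ Δ (C Δ)^k k!` for `2 ≤ k ≤ l-1`, then
`|∇^{l-1}(x_i^n)| ≤ (C Δ)^{l-1} (l-1)! n! e^{2 + 1/C}`. -/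
theorem fdiff_power_inductive_bound (N l n : ℕ) (hl : 3 ≤ l) (hn : 1 ≤ n)
    (Δ C : ℝ) (hΔ : 0 < Δ) (hC : 1 ≤ C) (hlΔ : ((l : ℝ) - 3) * Δ ≤ 1)
    (x : ℕ → ℝ)
    (hx01 : ∀ i, 1 ≤ i → i ≤ N → 0 ≤ x i ∧ x i ≤ 1)
    (hx1 : ∀ i, 1 ≤ i → i + 1 ≤ N → |fdiff 1 x i| ≤ Δ)
    (hxk : ∀ k, 2 ≤ k → k ≤ l - 1 → ∀ i, 1 ≤ i → i + k ≤ N →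
      |fdiff k x i| ≤ Δ * (C * Δ) ^ k * (Nat.factorial k : ℝ)) :
    ∀ i, 1 ≤ i → i + (l - 1) ≤ N →
      |fdiff (l - 1) (fun j => x j ^ n) i| ≤
        (C * Δ) ^ (l - 1) * (Nat.factorial (l - 1) : ℝ) * (Nat.factorial n : ℝ) *
          Real.exp (2 + 1 / C) := by
  intro i hi hiN
  have hC0 : (0:ℝ) < C := lt_of_lt_of_le one_pos hC
  have hm2 : 2 ≤ l - 1 := by omega
  have hfacn : (1:ℝ) ≤ (Nat.factorial n : ℝ) := by
    exact_mod_cast Nat.one_le_iff_ne_zero.mpr (Nat.factorial_ne_zero n)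
  have hexp2 : (2:ℝ) ≤ Real.exp (2 + 1/C) := by
    have h1 := Real.add_one_le_exp (2 + 1/C)
    have h2 : (0:ℝ) < 1/C := by positivity
    linarith
  rcases le_or_gt Δ 1 with hΔ1 | hΔ1
  · -- main case: Δ ≤ 1
    have hcastm : ((l - 1 : ℕ) : ℝ) = (l:ℝ) - 1 := by
      push_cast [Nat.cast_sub (by omega : 1 ≤ l)]
      ring
    have hmΔ : (((l-1 : ℕ):ℝ) - 2) * Δ ≤ 1 := by
      rw [hcastm]
      calc ((l:ℝ) - 1 - 2) * Δ = ((l:ℝ) - 3) * Δ := by ring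
        _ ≤ 1 := hlΔ
    have hbnd : ∀ k, k ≤ l - 1 → ∀ i', 1 ≤ i' → i' + k ≤ N →
        |fdiff k x i'| ≤ (C * Δ) ^ k * (k.factorial : ℝ) * hh C Δ k := by
      intro k hk i' hi' hiN'
      match k with
      | 0 =>
        rw [fdiff_zero]
        have h1 := hx01 i' hi' (by omega)
        have h2 : hh C Δ 0 = 1 := by simp [hh]
        rw [h2]
        simp only [pow_zero, Nat.factorial_zero, Nat.cast_one, one_mul, mul_one]
        rw [abs_le]
        constructor <;> linarith [h1.1, h1.2]
      | 1 =>
        have h2 : hh C Δ 1 = 1/C := by simp [hh]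
        rw [h2]
        have h3 : (C * Δ) ^ 1 * ((1:ℕ).factorial : ℝ) * (1/C) = Δ := by
          field_simp
          simp
        rw [h3]
        exact hx1 i' hi' hiN'
      | (k+2) =>
        have h2 : hh C Δ (k+2) = Δ := by simp [hh]
        rw [h2]
        have h3 : (C * Δ) ^ (k+2) * ((k+2).factorial : ℝ) * Δ
            = Δ * (C * Δ) ^ (k+2) * ((k+2).factorial : ℝ) := by ring
        rw [h3]
        exact hxk (k+2) (by omega) hk i' hi' hiN'
    have h1 := claimA C Δ hC (le_of_lt hΔ) N (l-1) x hbnd n (l-1) i le_rfl hi hiN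
    have h2 := Ss_le hC (le_of_lt hΔ) hΔ1 (l-1) n hm2 hmΔ
    calc |fdiff (l-1) (fun j => x j ^ n) i|
        ≤ (C * Δ) ^ (l-1) * ((l-1).factorial : ℝ) * Ss C Δ n (l-1) := h1
      _ ≤ (C * Δ) ^ (l-1) * ((l-1).factorial : ℝ) * ((n.factorial : ℝ) * Real.exp (2 + 1/C)) := by
          apply mul_le_mul_of_nonneg_left h2 (by positivity)
      _ = (C * Δ) ^ (l - 1) * (Nat.factorial (l - 1) : ℝ) * (Nat.factorial n : ℝ) *
          Real.exp (2 + 1 / C) := by ring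
  · -- easy case: Δ > 1
    have hCD1 : (1:ℝ) ≤ C * Δ := by
      calc (1:ℝ) = 1 * 1 := by ring
        _ ≤ C * Δ := mul_le_mul hC (le_of_lt hΔ1) zero_le_one (by positivity)
    have htriv : |fdiff (l-1) (fun j => x j ^ n) i| ≤ 2^(l-1) := by
      apply fdiff_abs_le_two_pow
      intro k hk
      have h1 := hx01 (i+k) (by omega) (by omega)
      rw [abs_pow]
      apply pow_le_one₀
      · exact abs_nonneg _
      · rw [abs_le]; constructor <;> linarith [h1.1, h1.2]
    have hfac2 : (2:ℝ)^(l-1) ≤ 2 * ((l-1).factorial : ℝ) := by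
      have := two_pow_le_fac (l-1) (by omega)
      exact_mod_cast this
    have hfacpos : (0:ℝ) ≤ ((l-1).factorial : ℝ) := by positivity
    calc |fdiff (l-1) (fun j => x j ^ n) i| ≤ 2^(l-1) := htriv
      _ ≤ 2 * ((l-1).factorial : ℝ) := hfac2
      _ ≤ Real.exp (2 + 1/C) * ((l-1).factorial : ℝ) := by
          apply mul_le_mul_of_nonneg_right hexp2 hfacpos
      _ = 1 * ((l-1).factorial : ℝ) * 1 * Real.exp (2 + 1/C) := by ring
      _ ≤ (C * Δ) ^ (l-1) * ((l-1).factorial : ℝ) * (Nat.factorial n : ℝ) * Real.exp (2 + 1/C) := by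
          refine mul_le_mul_of_nonneg_right ?_ (le_of_lt (Real.exp_pos _))
          apply mul_le_mul ?_ hfacn zero_le_one ?_
          · exact mul_le_mul_of_nonneg_right (one_le_pow₀ hCD1) hfacpos
          · positivity
end
end

section
/- Let L > 0 and let F : [0, L] → ℝ be continuous and nondecreasing. For each N ≥ 3 let x^{(N)} be the (unique) fixed configuration of N points on [0, L] under F, with x_1 = 0 and x_N = L. Then the increments satisfy x_{i+1} − x_i ~ L/(N−1) uniformly in i; precisely: for every ε > 0 there exists N₀ such that for all N ≥ N₀ and all 1 ≤ i ≤ N−1, |(x_{i+1} − x_i)·(N−1)/L − 1| ≤ ε. In particular this asymptotics does not depend on F. -/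
open Finset

noncomputable section

/-- A fixed configuration of `N` points `0 = x 1 < x 2 < ⋯ < x N = L` on `[0, L]`
under the external force `F`, with nearest-neighbour Coulomb repulsion `f r = r⁻²`. -/
def IsFixedConfigOn (L : ℝ) (N : ℕ) (F : ℝ → ℝ) (x : ℕ → ℝ) : Prop :=
  x 1 = 0 ∧ x N = L ∧
  (∀ i, 1 ≤ i → i < N → x i < x (i + 1)) ∧
  (∀ i, 2 ≤ i → i ≤ N - 1 →
    1 / (x i - x (i - 1)) ^ 2 - 1 / (x (i + 1) - x i) ^ 2 + F (x i) = 0)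

set_option maxHeartbeats 1000000 in
/-- First differences of fixed configurations satisfy `x_{i+1} - x_i ~ L/(N-1)`
uniformly in `i`, independently of the (continuous, nondecreasing) force `F`. -/
theorem increments_asymptotics (L : ℝ) (hL : 0 < L) (F : ℝ → ℝ)
    (hFcont : ContinuousOn F (Set.Icc 0 L)) (hFmono : MonotoneOn F (Set.Icc 0 L)) :
    ∀ ε : ℝ, 0 < ε → ∃ N₀ : ℕ, ∀ N : ℕ, N₀ ≤ N → 3 ≤ N →
      ∀ x : ℕ → ℝ, IsFixedConfigOn L N F x →
        ∀ i, 1 ≤ i → i ≤ N - 1 →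
          |(x (i + 1) - x i) * ((N : ℝ) - 1) / L - 1| ≤ ε := by
  obtain ⟨M, hM⟩ := isCompact_Icc.exists_bound_of_continuousOn hFcont
  have hM0 : 0 ≤ M := le_trans (norm_nonneg (F 0)) (hM 0 ⟨le_refl 0, hL.le⟩)
  intro ε hε
  set e := min ε 1 with he_def
  have he0 : 0 < e := lt_min hε one_pos
  have he1 : e ≤ 1 := min_le_right _ _
  have heε : e ≤ ε := min_le_left _ _
  refine ⟨⌈6*M*L^2/e + 2⌉₊, fun N hN hN3 x hx i hi1 hi2 => ?_⟩
  obtain ⟨hx1, hxN, hxlt, hxeq⟩ := hx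
  have hNR : 6*M*L^2/e + 2 ≤ (N:ℝ) := le_trans (Nat.le_ceil _) (by exact_mod_cast hN)
  set n : ℝ := (N:ℝ) - 1 with hn
  have hN3' : (3:ℝ) ≤ (N:ℝ) := by exact_mod_cast hN3
  have hn2 : (2:ℝ) ≤ n := by rw [hn]; linarith only [hN3']
  have hn0 : (0:ℝ) < n := by linarith only [hn2]
  have hkey : 6*M*L^2 ≤ e * n := by
    have h1 : 6*M*L^2/e ≤ n := by rw [hn]; linarith only [hNR]
    calc 6*M*L^2 = 6*M*L^2/e*e := (div_mul_cancel₀ _ he0.ne').symm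
      _ ≤ n*e := mul_le_mul_of_nonneg_right h1 he0.le
      _ = e*n := mul_comm _ _
  -- monotonicity of the configuration
  have hmono : ∀ a b : ℕ, 1 ≤ a → a ≤ b → b ≤ N → x a ≤ x b := by
    intro a b ha hab hbN
    induction b, hab using Nat.le_induction with
    | base => exact le_refl _
    | succ b hab ih =>
      have hbN' : b < N := by omega
      exact le_trans (ih (by omega)) (le_of_lt (hxlt b (le_trans ha hab) hbN'))
  have hxmem : ∀ k : ℕ, 1 ≤ k → k ≤ N → x k ∈ Set.Icc (0:ℝ) L := by
    intro k h1 h2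
    constructor
    · rw [← hx1]; exact hmono 1 k le_rfl h1 h2
    · rw [← hxN]; exact hmono k N h1 h2 le_rfl
  have hdpos : ∀ k : ℕ, 1 ≤ k → k ≤ N - 1 → 0 < x (k+1) - x k := by
    intro k h1 h2
    exact sub_pos.2 (hxlt k h1 (by omega))
  -- drift bound on the inverse-square gaps
  have hdrift : ∀ k : ℕ, 1 ≤ k → k ≤ N - 1 →
      |1/(x (k+1) - x k)^2 - 1/(x (1+1) - x 1)^2| ≤ (k:ℝ) * M := by
    intro k hk1 hk2
    induction k, hk1 using Nat.le_induction with
    | base => simp only [sub_self, abs_zero, Nat.cast_one, one_mul]; exact hM0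
    | succ k hk ih =>
      have ihk := ih (by omega)
      have heq := hxeq (k+1) (by omega) (by omega)
      simp only [Nat.add_sub_cancel] at heq
      have hF : |F (x (k+1))| ≤ M := by
        have := hM (x (k+1)) (hxmem (k+1) (by omega) (by omega))
        simpa [Real.norm_eq_abs] using this
      have hstep : 1/(x (k+1+1) - x (k+1))^2
          = 1/(x (k+1) - x k)^2 + F (x (k+1)) := by linarith only [heq]
      rw [hstep]
      have hre : 1/(x (k+1) - x k)^2 + F (x (k+1)) - 1/(x (1+1) - x 1)^2
          = (1/(x (k+1) - x k)^2 - 1/(x (1+1) - x 1)^2) + F (x (k+1)) := by ring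
      rw [hre]
      calc |(1/(x (k+1) - x k)^2 - 1/(x (1+1) - x 1)^2) + F (x (k+1))|
          ≤ |1/(x (k+1) - x k)^2 - 1/(x (1+1) - x 1)^2| + |F (x (k+1))| := abs_add_le _ _
        _ ≤ (k:ℝ)*M + M := add_le_add ihk hF
        _ = ((k+1:ℕ):ℝ)*M := by push_cast; ring
  -- uniform comparison of inverse-square gaps
  have hgap2 : ∀ a b : ℕ, 1 ≤ a → a ≤ N - 1 → 1 ≤ b → b ≤ N - 1 →
      1/(x (a+1) - x a)^2 ≤ 1/(x (b+1) - x b)^2 + 2*(N:ℝ)*M := by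
    intro a b ha1 ha2 hb1 hb2
    have h1 := hdrift a ha1 ha2
    have h2 := hdrift b hb1 hb2
    rw [abs_le] at h1 h2
    have haN : (a:ℝ) ≤ N := by exact_mod_cast (by omega : a ≤ N)
    have hbN : (b:ℝ) ≤ N := by exact_mod_cast (by omega : b ≤ N)
    linarith only [mul_le_mul_of_nonneg_right haN hM0, mul_le_mul_of_nonneg_right hbN hM0,
      h1.2, h2.1]
  -- total length
  have hsum : ∑ k ∈ Finset.range (N-1), (x (k+1+1) - x (k+1)) = L := by
    have h := Finset.sum_range_sub (fun k => x (k+1)) (N-1)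
    have hNm : N - 1 + 1 = N := by omega
    rw [hNm] at h
    rw [h, hxN]
    norm_num [hx1]
  have hcast : ((N-1:ℕ):ℝ) = n := by
    rw [hn, Nat.cast_sub (by omega : 1 ≤ N), Nat.cast_one]
  have hconst : ∑ _k ∈ Finset.range (N-1), (L/n) = L := by
    rw [Finset.sum_const, Finset.card_range, nsmul_eq_mul, hcast]
    field_simp
  have hne : (Finset.range (N-1)).Nonempty := by
    rw [Finset.nonempty_range_iff]; omega
  obtain ⟨k, hkmem, hksmall⟩ :=
    Finset.exists_le_of_sum_le hne (le_of_eq (hsum.trans hconst.symm))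
  obtain ⟨m, hmmem, hmbig⟩ :=
    Finset.exists_le_of_sum_le hne (le_of_eq (hconst.trans hsum.symm))
  have hkmem' : k < N - 1 := Finset.mem_range.mp hkmem
  have hmmem' : m < N - 1 := Finset.mem_range.mp hmmem
  have hu0 : (0:ℝ) < n / L := div_pos hn0 hL
  set u := n / L with hu
  have hinv : 1/(L/n)^2 = u^2 := by rw [hu, div_pow, div_pow, one_div_div]
  have hdk := hdpos (k+1) (by omega) (by omega)
  have hdm := hdpos (m+1) (by omega) (by omega)
  have hLn : 0 < L / n := div_pos hL hn0
  have hgk : u^2 ≤ 1/(x (k+1+1) - x (k+1))^2 := by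
    rw [← hinv]
    exact one_div_le_one_div_of_le (pow_pos hdk 2) (pow_le_pow_left₀ hdk.le hksmall 2)
  have hgm : 1/(x (m+1+1) - x (m+1))^2 ≤ u^2 := by
    rw [← hinv]
    exact one_div_le_one_div_of_le (pow_pos hLn 2) (pow_le_pow_left₀ hLn.le hmbig 2)
  set s := 2*(N:ℝ)*M with hs_def
  have hs0 : 0 ≤ s := by rw [hs_def]; positivity
  have hgU : 1/(x (i+1) - x i)^2 ≤ u^2 + s :=
    le_trans (hgap2 i (m+1) hi1 hi2 (by omega) (by omega)) (by linarith only [hgm])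
  have hgL : u^2 - s ≤ 1/(x (i+1) - x i)^2 := by
    have := hgap2 (k+1) i (by omega) (by omega) hi1 hi2
    linarith only [this, hgk]
  have h2s : 2*s ≤ e * u^2 := by
    have hnu : n = u * L := by rw [hu]; field_simp
    have h6 : 6*M*n ≤ e*u^2 := by
      have h := mul_le_mul_of_nonneg_right hkey hn0.le
      rw [hnu] at h ⊢
      have h' : (6*M*(u*L)) * L^2 ≤ (e*u^2) * L^2 := by
        calc (6*M*(u*L))*L^2 = 6*M*L^2*(u*L) := by ring
          _ ≤ e*(u*L)*(u*L) := h
          _ = (e*u^2)*L^2 := by ring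
      exact le_of_mul_le_mul_right h' (by positivity)
    have hNn : (N:ℝ) = n + 1 := by rw [hn]; ring
    rw [hs_def, hNn]
    linarith only [mul_nonneg hM0 (by linarith only [hn2] : (0:ℝ) ≤ n - 2), h6]
  set d := x (i+1) - x i with hd_def
  have hdi : 0 < d := hdpos i hi1 hi2
  set gi := 1/d^2 with hgi_def
  have hd2 : d^2 * gi = 1 := by rw [hgi_def]; field_simp
  have hgipos : 0 < gi := by rw [hgi_def]; exact div_pos one_pos (pow_pos hdi 2)
  have hdu2 : (d*u)^2 * gi = u^2 := by
    calc (d*u)^2 * gi = (d^2*gi)*u^2 := by ring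
      _ = u^2 := by rw [hd2]; ring
  -- upper bound
  have h1 : u^2 ≤ (1+e)^2 * gi := by
    have hF1 := mul_le_mul_of_nonneg_left hgL (by positivity : (0:ℝ) ≤ (1+e)^2)
    have hF2 : 0 ≤ e*e*u^2 := mul_nonneg (mul_nonneg he0.le he0.le) (sq_nonneg u)
    have hF3 : (1+e)^2 * s ≤ 4 * s :=
      mul_le_mul_of_nonneg_right (by nlinarith only [he0, he1] : (1+e)^2 ≤ 4) hs0
    linarith only [hF1, hF2, hF3, h2s]
  have htU : d*u ≤ 1+e := by
    have h2 : (d*u)^2 * gi ≤ (1+e)^2 * gi := by rw [hdu2]; exact h1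
    have h3 : (d*u)^2 ≤ (1+e)^2 := le_of_mul_le_mul_right h2 hgipos
    exact (pow_le_pow_iff_left₀ (mul_pos hdi hu0).le (by linarith only [he0] : (0:ℝ) ≤ 1 + e) two_ne_zero).mp h3
  -- lower bound
  have h1' : (1-e)^2 * (u^2 + s) ≤ u^2 := by
    have hH1 : 0 ≤ e*(1-e)*u^2 :=
      mul_nonneg (mul_nonneg he0.le (by linarith only [he1] : (0:ℝ) ≤ 1 - e)) (sq_nonneg u)
    have hH2 : 0 ≤ e*s*(2-e) :=
      mul_nonneg (mul_nonneg he0.le hs0) (by linarith only [he1] : (0:ℝ) ≤ 2 - e)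
    linarith only [hH1, hH2, h2s, hs0]
  have htL : 1-e ≤ d*u := by
    have hmid : u^2 ≤ (d*u)^2 * (u^2+s) := by
      calc u^2 = (d*u)^2 * gi := hdu2.symm
        _ ≤ (d*u)^2 * (u^2+s) := mul_le_mul_of_nonneg_left hgU (sq_nonneg _)
    have hpos : 0 < u^2 + s := by linarith only [pow_pos hu0 2, hs0]
    have h2 : (1-e)^2 * (u^2+s) ≤ (d*u)^2 * (u^2+s) := le_trans h1' hmid
    have h3 : (1-e)^2 ≤ (d*u)^2 := le_of_mul_le_mul_right h2 hpos
    exact (pow_le_pow_iff_left₀ (by linarith only [he1] : (0:ℝ) ≤ 1 - e) (mul_pos hdi hu0).le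
      two_ne_zero).mp h3
  have hfin : |d * u - 1| ≤ e := by
    rw [abs_le]; constructor <;> linarith only [htU, htL]
  rw [mul_div_assoc, ← hu]
  exact hfin.trans heε

end
end

section
/- Let F > 0 be a constant and for each N ≥ 3 let x^{(N)} be the fixed configuration of N points on [0, 1] under the constant external force F(x) ≡ F. Then the second-order term of the increments satisfies (x_{i+1} − x_i) − 1/(N−1) ~ (F/2)·N^{−3}·(N/2 − i); precisely: for every ε > 0 there exists N₀ such that for all N ≥ N₀ and all i = 2, …, N−1, |(x_{i+1} − x_i) − 1/(N−1) − (F/2)·N^{−3}·(N/2 − i)| ≤ ε·N^{−2}. -/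
open Finset

noncomputable section

set_option maxHeartbeats 1000000

lemma sqrt_inv_taylor (u : ℝ) (hu : |u| ≤ 1/2) :
    |(Real.sqrt (1+u))⁻¹ - (1 - u/2)| ≤ 2*u^2 := by
  have hu1 : -(1/2) ≤ u := (abs_le.1 hu).1
  have hu2 : u ≤ 1/2 := (abs_le.1 hu).2
  have h0 : (0:ℝ) < 1 + u := by linarith
  set w := Real.sqrt (1+u) with hw
  have hwpos : 0 < w := Real.sqrt_pos.2 h0
  have hwsq : w^2 = 1 + u := Real.sq_sqrt h0.le
  have hwub : w ≤ 1 + u/2 := by nlinarith [hwpos, hwsq, sq_nonneg u, sq_nonneg (w - (1+u/2)), sq_nonneg (w + (1+u/2))]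
  have hwlb : 1 + u/2 - u^2/2 ≤ w := by nlinarith [hwpos, hwsq, sq_nonneg (w - (1+u/2-u^2/2)), sq_nonneg (w + (1+u/2-u^2/2))]
  have hw58 : 5/8 ≤ w := by nlinarith
  have key : (Real.sqrt (1+u))⁻¹ - (1 - u/2) = (1 - (1-u/2)*w)/w := by
    rw [← hw]; field_simp
  rw [key, abs_div, abs_of_pos hwpos, div_le_iff₀ hwpos]
  have h1 : |1 - (1-u/2)*w| ≤ (7/8)*u^2 := by
    rw [abs_le]; constructor <;> nlinarith
  nlinarith [sq_nonneg u]

lemma gauss_real (n : ℕ) : ∑ j ∈ Finset.range n, (j:ℝ) = (n:ℝ)*((n:ℝ)-1)/2 := by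
  induction n with
  | zero => simp
  | succ k ih => rw [Finset.sum_range_succ, ih]; push_cast; ring

lemma two_sq_aux (A B : ℝ) : 2*(A/2 + B)^2 ≤ A^2 + 4*B^2 := by
  nlinarith [sq_nonneg (A - 2*B)]

lemma config_rep (F : ℝ) (N : ℕ) (hN : 3 ≤ N) (x : ℕ → ℝ)
    (hx : IsFixedConfig N (fun _ => F) x) :
    ∃ a : ℝ, 0 < a ∧
      (∀ i, 1 ≤ i → i < N → x (i+1) - x i = (Real.sqrt (a + ((i:ℝ)-1)*F))⁻¹) ∧
      ∑ i ∈ Finset.Ico 1 N, (Real.sqrt (a + ((i:ℝ)-1)*F))⁻¹ = 1 := by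
  obtain ⟨h0, h1, hmono, heq⟩ := hx
  have hd : ∀ i, 1 ≤ i → i < N → 0 < x (i+1) - x i :=
    fun i hi1 hi2 => sub_pos.2 (hmono i hi1 hi2)
  have hd1 : 0 < x 2 - x 1 := hd 1 le_rfl (by omega)
  set a : ℝ := ((x 2 - x 1)^2)⁻¹ with ha
  have hapos : 0 < a := inv_pos.2 (pow_pos hd1 2)
  have key : ∀ i, 1 ≤ i → i < N → ((x (i+1) - x i)^2)⁻¹ = a + ((i:ℝ)-1)*F := by
    intro i
    induction i with
    | zero => intro h1' _; exact absurd h1' (by omega)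
    | succ n ih =>
      intro h1' h2'
      rcases Nat.eq_zero_or_pos n with hn | hn
      · subst hn; push_cast; simp [ha]
      · have e := heq (n+1) (by omega) (by omega)
        simp only [Nat.add_sub_cancel] at e
        have ihn := ih (by omega) (by omega)
        have hpn : 0 < x (n+1) - x n := by
          have := hd n (by omega) (by omega); exact this
        have hpn1 : 0 < x (n+1+1) - x (n+1) := hd (n+1) (by omega) h2'
        have e2 : ((x (n+1+1) - x (n+1))^2)⁻¹ = ((x (n+1) - x n)^2)⁻¹ + F := by
          rw [← one_div, ← one_div]; linarith [e]
        rw [e2, ihn]; push_cast; ring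
  have hrep : ∀ i, 1 ≤ i → i < N → x (i+1) - x i = (Real.sqrt (a + ((i:ℝ)-1)*F))⁻¹ := by
    intro i hi1 hi2
    have hpos := hd i hi1 hi2
    have hk := key i hi1 hi2
    have hsq : (x (i+1) - x i)^2 = (a + ((i:ℝ)-1)*F)⁻¹ := by rw [← hk, inv_inv]
    calc x (i+1) - x i = Real.sqrt ((x (i+1) - x i)^2) := (Real.sqrt_sq hpos.le).symm
    _ = Real.sqrt ((a + ((i:ℝ)-1)*F)⁻¹) := by rw [hsq]
    _ = (Real.sqrt (a + ((i:ℝ)-1)*F))⁻¹ := Real.sqrt_inv _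
  refine ⟨a, hapos, hrep, ?_⟩
  have tele : ∑ i ∈ Finset.Ico 1 N, (x (i+1) - x i) = 1 := by
    rw [Finset.sum_Ico_eq_sum_range]
    have h := Finset.sum_range_sub (fun j => x (1+j)) (N-1)
    calc ∑ k ∈ Finset.range (N-1), (x (1+k+1) - x (1+k))
        = ∑ k ∈ Finset.range (N-1), (x (1+(k+1)) - x (1+k)) := rfl
    _ = x (1+(N-1)) - x (1+0) := Finset.sum_range_sub (fun j => x (1+j)) (N-1)
    _ = 1 := by rw [show 1 + (N-1) = N by omega, h1, show 1+0=1 from rfl, h0]; ring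
  calc ∑ i ∈ Finset.Ico 1 N, (Real.sqrt (a + ((i:ℝ)-1)*F))⁻¹
      = ∑ i ∈ Finset.Ico 1 N, (x (i+1) - x i) :=
        Finset.sum_congr rfl fun i hi =>
          (hrep i (Finset.mem_Ico.1 hi).1 (Finset.mem_Ico.1 hi).2).symm
  _ = 1 := tele


lemma sum_estimate (F c : ℝ) (N : ℕ) (hN : 3 ≤ N) (hF : 0 < F) (hc : 1 ≤ c)
    (hmc : 4*(F+c+1) ≤ (N:ℝ) - 1) (s : ℝ) (hs : |s + F*((N:ℝ)-2)/2| ≤ c) :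
    |∑ i ∈ Finset.Ico 1 N, (Real.sqrt (((N:ℝ)-1)^2 + s + ((i:ℝ)-1)*F))⁻¹
      - (1 - (s + F*((N:ℝ)-2)/2)/(2*((N:ℝ)-1)^2))| ≤
      F^2/((N:ℝ)-1)^2 + 4*c^2/((N:ℝ)-1)^4 := by
  set m : ℝ := (N:ℝ) - 1 with hm
  have hFc : (0:ℝ) ≤ F + c := by positivity
  have hm8 : 8 ≤ m := by linarith [hmc]
  have hm0 : (0:ℝ) < m := by linarith
  have hF4 : F ≤ m/4 := by linarith
  have hc4 : c ≤ m/4 := by linarith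
  have hcard : ((N - 1 : ℕ):ℝ) = m := by
    rw [hm, Nat.cast_sub (by omega)]; norm_num
  have hmN2 : m - 1 = (N:ℝ) - 2 := by rw [hm]; ring
  set u : ℕ → ℝ := fun i => (s + ((i:ℝ)-1)*F)/m^2 with hu
  set B : ℝ := F/(2*m) + c/m^2 with hB
  have hrange : ∀ i ∈ Finset.Ico 1 N, (0:ℝ) ≤ (i:ℝ)-1 ∧ (i:ℝ)-1 ≤ m-1 := by
    intro i hi
    obtain ⟨hi1, hi2⟩ := Finset.mem_Ico.1 hi
    have h1 : (1:ℝ) ≤ (i:ℝ) := by exact_mod_cast hi1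
    have h2 : (i:ℝ) + 1 ≤ (N:ℝ) := by exact_mod_cast hi2
    exact ⟨by linarith, by rw [hm]; linarith⟩
  have humax : ∀ i ∈ Finset.Ico 1 N, |u i| ≤ B := by
    intro i hi
    obtain ⟨hl, hr⟩ := hrange i hi
    obtain ⟨hs1, hs2⟩ := abs_le.1 hs
    have hnum : |s + ((i:ℝ)-1)*F| ≤ F*m/2 + c := by
      rw [abs_le]
      constructor
      · nlinarith [mul_nonneg hl hF.le]
      · nlinarith [mul_le_mul_of_nonneg_right hr hF.le, hF.le]
    calc |u i| = |s + ((i:ℝ)-1)*F|/m^2 := by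
          rw [hu, abs_div, abs_of_pos (by positivity : (0:ℝ) < m^2)]
    _ ≤ (F*m/2 + c)/m^2 := by gcongr
    _ = B := by rw [hB]; field_simp
  have hBhalf : B ≤ 1/2 := by
    rw [hB]
    have h1 : F/(2*m) ≤ 1/8 := by rw [div_le_iff₀ (by linarith)]; linarith
    have h2 : c/m^2 ≤ 1/32 := by
      rw [div_le_iff₀ (by positivity)]; nlinarith
    linarith
  have hB0 : 0 ≤ B := le_trans (abs_nonneg _) (humax 1 (Finset.mem_Ico.2 ⟨le_rfl, by omega⟩))
  have hterm : ∀ i ∈ Finset.Ico 1 N,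
      (Real.sqrt (m^2 + s + ((i:ℝ)-1)*F))⁻¹ = m⁻¹ * (Real.sqrt (1 + u i))⁻¹ := by
    intro i hi
    have hmu : m^2 + s + ((i:ℝ)-1)*F = m^2 * (1 + u i) := by
      rw [hu]; field_simp; ring
    rw [hmu, Real.sqrt_mul (by positivity), Real.sqrt_sq hm0.le, mul_inv]
  have hsumid : ∑ i ∈ Finset.Ico 1 N, ((i:ℝ)-1) = m*(m-1)/2 := by
    rw [Finset.sum_Ico_eq_sum_range]
    rw [Finset.sum_congr rfl (fun k _ => show ((1+k : ℕ):ℝ) - 1 = (k:ℝ) by push_cast; ring),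
      gauss_real, hcard]
  have hsumT : ∑ i ∈ Finset.Ico 1 N, (m⁻¹ * (1 - u i/2))
      = 1 - (s + F*((N:ℝ)-2)/2)/(2*m^2) := by
    calc ∑ i ∈ Finset.Ico 1 N, (m⁻¹ * (1 - u i/2))
        = ∑ i ∈ Finset.Ico 1 N, ((m⁻¹ - s/(2*m^3)) + (-F/(2*m^3)) * ((i:ℝ)-1)) := by
          refine Finset.sum_congr rfl fun i _ => ?_
          rw [hu]; field_simp; ring
    _ = (N-1) • (m⁻¹ - s/(2*m^3)) + (-F/(2*m^3)) * (m*(m-1)/2) := by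
          rw [Finset.sum_add_distrib, Finset.sum_const, Nat.card_Ico, ← Finset.mul_sum, hsumid]
    _ = 1 - (s + F*((N:ℝ)-2)/2)/(2*m^2) := by
          rw [nsmul_eq_mul, hcard, ← hmN2]; field_simp; ring
  rw [← hsumT, ← Finset.sum_sub_distrib]
  calc |∑ i ∈ Finset.Ico 1 N,
        ((Real.sqrt (m^2 + s + ((i:ℝ)-1)*F))⁻¹ - m⁻¹ * (1 - u i/2))|
      ≤ ∑ i ∈ Finset.Ico 1 N,
        |(Real.sqrt (m^2 + s + ((i:ℝ)-1)*F))⁻¹ - m⁻¹ * (1 - u i/2)| :=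
        Finset.abs_sum_le_sum_abs _ _
  _ ≤ (Finset.Ico 1 N).card • (m⁻¹ * (2*B^2)) := by
      refine Finset.sum_le_card_nsmul _ _ _ fun i hi => ?_
      rw [hterm i hi, ← mul_sub, abs_mul, abs_of_pos (inv_pos.2 hm0)]
      have ht := sqrt_inv_taylor (u i) (le_trans (humax i hi) hBhalf)
      have hu2 : (u i)^2 ≤ B^2 := by
        rw [← sq_abs]; exact pow_le_pow_left₀ (abs_nonneg _) (humax i hi) 2
      exact mul_le_mul_of_nonneg_left (le_trans ht (by linarith)) (inv_pos.2 hm0).le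
  _ = m * (m⁻¹ * (2*B^2)) := by rw [nsmul_eq_mul, Nat.card_Ico, hcard]
  _ = 2*B^2 := by rw [← mul_assoc, mul_inv_cancel₀ hm0.ne', one_mul]
  _ ≤ F^2/m^2 + 4*c^2/m^4 := by
      have e1 : F/(2*m) = (F/m)/2 := by rw [div_div, mul_comm]
      have e2 : (F/m)^2 = F^2/m^2 := div_pow F m 2
      have e3 : (c/m^2)^2 = c^2/m^4 := by rw [div_pow, ← pow_mul]
      rw [hB, e1]
      calc 2*((F/m)/2 + c/m^2)^2 ≤ (F/m)^2 + 4*(c/m^2)^2 := two_sq_aux _ _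
      _ = F^2/m^2 + 4*c^2/m^4 := by rw [e2, e3, mul_div_assoc]

lemma aux_e (c F m : ℝ) (hm : m ≠ 0) :
    c/(2*m^2)*m^4 = c*m^2/2 ∧ (F^2/m^2 + 4*c^2/m^4)*m^4 = F^2*m^2 + 4*c^2 := by
  constructor <;> field_simp <;> ring


lemma delta_bound (m n : ℝ) (hm : 0 < m) (hmn : m ≤ n) (h3 : 3 ≤ n) (hnm : n - m = 1) :
    0 ≤ 1/m^3 - (n^3)⁻¹ ∧ 1/m^3 - (n^3)⁻¹ ≤ 3/(m^3*n) := by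
  have hn0 : (0:ℝ) < n := by linarith
  have key : 1/m^3 - (n^3)⁻¹ = (n^3 - m^3)/(m^3*n^3) := by field_simp
  have hcube : m^3 ≤ n^3 := pow_le_pow_left₀ hm.le hmn 3
  constructor
  · rw [key]
    have hnn : 0 ≤ n^3 - m^3 := by linarith
    positivity
  · rw [key]
    have hmeq : m = n - 1 := by linarith
    subst hmeq
    have hnum : n^3 - (n-1)^3 ≤ 3*n^2 := by nlinarith
    calc (n^3 - (n-1)^3)/((n-1)^3*n^3) ≤ (3*n^2)/((n-1)^3*n^3) := by gcongr
    _ = 3/((n-1)^3*n) := by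
        rw [div_eq_div_iff (by positivity) (by positivity)]; ring

/-- Second-order term of the increments for constant external force `F > 0`:
`(x_{i+1} - x_i) - 1/(N-1) ~ (F/2) N⁻³ (N/2 - i)` uniformly in `i`. -/
theorem second_order_increment_asymptotics (F : ℝ) (hF : 0 < F) :
    ∀ ε : ℝ, 0 < ε → ∃ N₀ : ℕ, ∀ N : ℕ, N₀ ≤ N → 3 ≤ N →
      ∀ x : ℕ → ℝ, IsFixedConfig N (fun _ => F) x →
        ∀ i, 2 ≤ i → i ≤ N - 1 →
          |(x (i + 1) - x i) - 1 / ((N : ℝ) - 1) -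
              F / 2 * ((N : ℝ) ^ (3 : ℕ))⁻¹ * ((N : ℝ) / 2 - (i : ℝ))| ≤
            ε * ((N : ℝ) ^ (2 : ℕ))⁻¹ := by
  intro ε hε
  obtain ⟨c, hcdef⟩ : ∃ c : ℝ, c = 4*F^2 + 1 := ⟨_, rfl⟩
  have hc1 : (1:ℝ) ≤ c := by rw [hcdef]; nlinarith [sq_nonneg F]
  have hc0 : (0:ℝ) < c := by linarith
  obtain ⟨CF, hCFdef⟩ : ∃ y : ℝ, y = 2*(F+c)^2 + c + F := ⟨_, rfl⟩
  have hCF0 : (0:ℝ) < CF := by rw [hCFdef]; positivity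
  refine ⟨⌈8*CF/ε⌉₊ + ⌈4*(F+c+1)⌉₊ + 2, ?_⟩
  intro N hN0 hN3 x hx i hi2 hiN
  obtain ⟨a, ha, hrep, hsum⟩ := config_rep F N hN3 x hx
  obtain ⟨m, hm⟩ : ∃ y : ℝ, y = (N:ℝ) - 1 := ⟨_, rfl⟩
  have hN3R : (3:ℝ) ≤ (N:ℝ) := by exact_mod_cast hN3
  have hNpos : (0:ℝ) < (N:ℝ) := by linarith
  have hmc : 4*(F+c+1) ≤ m := by
    have h1 : (⌈4*(F+c+1)⌉₊ : ℝ) + 2 ≤ (N:ℝ) := by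
      have : ⌈4*(F+c+1)⌉₊ + 2 ≤ N := by omega
      exact_mod_cast this
    have h2 := Nat.le_ceil (4*(F+c+1))
    rw [hm]; linarith
  have hNCF : 8*CF/ε ≤ (N:ℝ) := by
    have h1 : (⌈8*CF/ε⌉₊ : ℝ) ≤ (N:ℝ) := by
      have : ⌈8*CF/ε⌉₊ ≤ N := by omega
      exact_mod_cast this
    linarith [Nat.le_ceil (8*CF/ε)]
  have hm0 : (0:ℝ) < m := by rw [hm]; linarith
  have hm8 : (8:ℝ) ≤ m := by nlinarith [hF.le, hc1]
  have hF4 : F ≤ m/4 := by nlinarith [hc1]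
  have hc4 : c ≤ m/4 := by nlinarith [hF.le]
  have hm4c : 4*c ≤ m := by linarith
  -- Step 1: |e| ≤ c  where e = a - m² + F(N-2)/2
  have habs : |a - m^2 + F*((N:ℝ)-2)/2| ≤ c := by
    by_contra hcon
    rw [not_le] at hcon
    rcases lt_abs.1 hcon with hgt | hgt
    · -- a too large
      have hs'e : (-(F*((N:ℝ)-2)/2) + c) + F*((N:ℝ)-2)/2 = c := by ring
      have hest := sum_estimate F c N hN3 hF hc1 (hm ▸ hmc) (-(F*((N:ℝ)-2)/2) + c)
        (by rw [hs'e, abs_of_pos hc0])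
      rw [hs'e] at hest
      rw [← hm] at hest
      have hle : (1:ℝ) ≤ ∑ i ∈ Finset.Ico 1 N,
          (Real.sqrt (m^2 + (-(F*((N:ℝ)-2)/2) + c) + ((i:ℝ)-1)*F))⁻¹ := by
        refine le_trans hsum.ge (Finset.sum_le_sum fun j hj => ?_)
        have hj1 : (1:ℝ) ≤ (j:ℝ) := by exact_mod_cast (Finset.mem_Ico.1 hj).1
        have hw : (0:ℝ) ≤ ((j:ℝ)-1)*F := mul_nonneg (by linarith) hF.le
        have hlt : m^2 + (-(F*((N:ℝ)-2)/2) + c) + ((j:ℝ)-1)*F ≤ a + ((j:ℝ)-1)*F := by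
          linarith
        have hpos' : (0:ℝ) < m^2 + (-(F*((N:ℝ)-2)/2) + c) + ((j:ℝ)-1)*F := by
          have hN2m : (N:ℝ) - 2 = m - 1 := by rw [hm]; ring
          rw [hN2m]; nlinarith
        exact inv_anti₀ (Real.sqrt_pos.2 hpos') (Real.sqrt_le_sqrt hlt)
      have h2 := (abs_le.1 hest).2
      have hm4 : (0:ℝ) < m^4 := by positivity
      have key : c/(2*m^2) ≤ F^2/m^2 + 4*c^2/m^4 := by linarith only [h2, hle]
      have key2 := mul_le_mul_of_nonneg_right key hm4.le
      obtain ⟨e1, e2⟩ := aux_e c F m hm0.ne'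
      rw [e1, e2] at key2
      clear hest hrep hsum hx h2
      rw [hcdef] at key2 hm4c
      nlinarith [mul_le_mul_of_nonneg_left hm4c (by nlinarith [sq_nonneg F] : (0:ℝ) ≤ 4*(4*F^2+1)), sq_nonneg F, hm0]
    · -- a too small
      have hs''e : (-(F*((N:ℝ)-2)/2) - c) + F*((N:ℝ)-2)/2 = -c := by ring
      have hest := sum_estimate F c N hN3 hF hc1 (hm ▸ hmc) (-(F*((N:ℝ)-2)/2) - c)
        (by rw [hs''e, abs_neg, abs_of_pos hc0])
      rw [hs''e] at hest
      rw [← hm] at hest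
      have hge : ∑ i ∈ Finset.Ico 1 N,
          (Real.sqrt (m^2 + (-(F*((N:ℝ)-2)/2) - c) + ((i:ℝ)-1)*F))⁻¹ ≤ 1 := by
        refine le_trans (Finset.sum_le_sum fun j hj => ?_) hsum.le
        have hj1 : (1:ℝ) ≤ (j:ℝ) := by exact_mod_cast (Finset.mem_Ico.1 hj).1
        have hw : (0:ℝ) ≤ ((j:ℝ)-1)*F := mul_nonneg (by linarith) hF.le
        have hlt : a + ((j:ℝ)-1)*F ≤ m^2 + (-(F*((N:ℝ)-2)/2) - c) + ((j:ℝ)-1)*F := by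
          linarith
        have hpos' : (0:ℝ) < a + ((j:ℝ)-1)*F := by linarith
        exact inv_anti₀ (Real.sqrt_pos.2 hpos') (Real.sqrt_le_sqrt hlt)
      have h2 := (abs_le.1 hest).1
      have hm4 : (0:ℝ) < m^4 := by positivity
      have key : c/(2*m^2) ≤ F^2/m^2 + 4*c^2/m^4 := by
        have hne : (1:ℝ) - -c/(2*m^2) = 1 + c/(2*m^2) := by ring
        rw [hne] at h2; linarith only [h2, hge]
      have key2 := mul_le_mul_of_nonneg_right key hm4.le
      obtain ⟨e1, e2⟩ := aux_e c F m hm0.ne'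
      rw [e1, e2] at key2
      clear hest hrep hsum hx h2
      rw [hcdef] at key2 hm4c
      nlinarith [mul_le_mul_of_nonneg_left hm4c (by nlinarith [sq_nonneg F] : (0:ℝ) ≤ 4*(4*F^2+1)), sq_nonneg F, hm0]
  -- Step 2: pointwise estimate
  have hiN' : i < N := by omega
  have hi1 : 1 ≤ i := by omega
  have hiR2 : (2:ℝ) ≤ (i:ℝ) := by exact_mod_cast hi2
  have hiRm : (i:ℝ) ≤ m := by
    rw [hm]
    have : i + 1 ≤ N := by omega
    have := (Nat.cast_le (α := ℝ)).2 this
    push_cast at this; linarith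
  have hN2m : (N:ℝ) ≤ 2*m := by rw [hm]; linarith
  obtain ⟨u, hudef⟩ : ∃ y : ℝ, y = (a - m^2 + ((i:ℝ)-1)*F)/m^2 := ⟨_, rfl⟩
  have hmu : a + ((i:ℝ)-1)*F = m^2*(1+u) := by
    rw [hudef]; field_simp; ring
  have hd : x (i+1) - x i = m⁻¹ * (Real.sqrt (1+u))⁻¹ := by
    rw [hrep i hi1 hiN', hmu, Real.sqrt_mul (by positivity), Real.sqrt_sq hm0.le, mul_inv]
  have huabs : |u| ≤ (F+c)/m := by
    rw [hudef, abs_div, abs_of_pos (by positivity : (0:ℝ) < m^2), div_le_div_iff₀ (by positivity) hm0]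
    have h1 : a - m^2 + ((i:ℝ)-1)*F = (a - m^2 + F*((N:ℝ)-2)/2) + F*((i:ℝ) - (N:ℝ)/2) := by ring
    have h2 : |F*((i:ℝ) - (N:ℝ)/2)| ≤ F*m := by
      rw [abs_mul, abs_of_pos hF]
      have : |(i:ℝ) - (N:ℝ)/2| ≤ m := by
        rw [abs_le]; constructor <;> [linarith; linarith]
      exact mul_le_mul_of_nonneg_left this hF.le
    have h3 : |a - m^2 + ((i:ℝ)-1)*F| ≤ c + F*m := by
      rw [h1]; exact (abs_add_le _ _).trans (add_le_add habs h2)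
    nlinarith [mul_le_mul_of_nonneg_right h3 hm0.le, hm8, hc0, abs_nonneg (a - m^2 + ((i:ℝ)-1)*F)]
  have huhalf : |u| ≤ 1/2 := by
    refine huabs.trans ?_
    rw [div_le_iff₀ hm0]; nlinarith
  have htay := sqrt_inv_taylor u huhalf
  -- decomposition
  have hdecomp : (x (i + 1) - x i) - 1 / ((N:ℝ) - 1) -
      F / 2 * ((N:ℝ) ^ (3:ℕ))⁻¹ * ((N:ℝ) / 2 - (i:ℝ))
      = m⁻¹ * ((Real.sqrt (1+u))⁻¹ - (1 - u/2))
        + (F/2 * ((N:ℝ)/2 - (i:ℝ)) * (1/m^3 - ((N:ℝ)^3)⁻¹)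
           - (a - m^2 + F*((N:ℝ)-2)/2)/(2*m^3)) := by
    rw [hd, hudef, ← hm]
    have hNne : (N:ℝ) ≠ 0 := hNpos.ne'
    field_simp
    ring
  rw [hdecomp]
  have hA : |m⁻¹ * ((Real.sqrt (1+u))⁻¹ - (1 - u/2))| ≤ 2*(F+c)^2/m^3 := by
    rw [abs_mul, abs_of_pos (inv_pos.2 hm0)]
    have hu2 : u^2 ≤ ((F+c)/m)^2 := by
      rw [← sq_abs]; exact pow_le_pow_left₀ (abs_nonneg _) huabs 2
    calc m⁻¹ * |(Real.sqrt (1+u))⁻¹ - (1 - u/2)| ≤ m⁻¹ * (2*((F+c)/m)^2) := by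
          refine mul_le_mul_of_nonneg_left (htay.trans ?_) (inv_pos.2 hm0).le
          linarith
    _ = 2*(F+c)^2/m^3 := by field_simp
  have hDelta := delta_bound m (N:ℝ) hm0 (by rw [hm]; linarith) hN3R (by rw [hm]; ring)
  have hR1 : |F/2*((N:ℝ)/2-(i:ℝ))*(1/m^3-((N:ℝ)^3)⁻¹)| ≤ F/m^3 := by
    rw [abs_mul, abs_mul, abs_of_pos (half_pos hF), abs_of_nonneg hDelta.1]
    have habs_i : |(N:ℝ)/2 - (i:ℝ)| ≤ (N:ℝ)/2 := by
      rw [abs_le]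
      constructor
      · rw [hm] at hiRm; linarith
      · linarith
    have step : F/2 * |(N:ℝ)/2-(i:ℝ)| * (1/m^3-((N:ℝ)^3)⁻¹)
        ≤ F/2 * ((N:ℝ)/2) * (3/(m^3*(N:ℝ))) := by
      refine mul_le_mul (mul_le_mul_of_nonneg_left habs_i (by positivity)) hDelta.2
        hDelta.1 (by positivity)
    refine step.trans ?_
    have heq : F/2*((N:ℝ)/2)*(3/(m^3*(N:ℝ))) = 3*F/(4*m^3) := by
      field_simp; ring
    rw [heq, div_le_div_iff₀ (by positivity) (by positivity)]
    linarith only [mul_pos hF (pow_pos hm0 3)]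
  have hR2 : |(a - m^2 + F*((N:ℝ)-2)/2)/(2*m^3)| ≤ c/(2*m^3) := by
    rw [abs_div, abs_of_pos (by positivity : (0:ℝ) < 2*m^3)]
    gcongr
  calc |m⁻¹ * ((Real.sqrt (1+u))⁻¹ - (1 - u/2))
        + (F/2 * ((N:ℝ)/2 - (i:ℝ)) * (1/m^3 - ((N:ℝ)^3)⁻¹)
           - (a - m^2 + F*((N:ℝ)-2)/2)/(2*m^3))|
      ≤ |m⁻¹ * ((Real.sqrt (1+u))⁻¹ - (1 - u/2))|
        + (|F/2 * ((N:ℝ)/2 - (i:ℝ)) * (1/m^3 - ((N:ℝ)^3)⁻¹)|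
           + |(a - m^2 + F*((N:ℝ)-2)/2)/(2*m^3)|) :=
      (abs_add_le _ _).trans (add_le_add_right (abs_sub _ _) _)
  _ ≤ 2*(F+c)^2/m^3 + (F/m^3 + c/(2*m^3)) := add_le_add hA (add_le_add hR1 hR2)
  _ ≤ CF/m^3 := by
      have e1 : c/(2*m^3) = (c/2)/m^3 := (div_div c 2 (m^3)).symm
      have e2 : 2*(F+c)^2/m^3 + (F/m^3 + (c/2)/m^3) = (2*(F+c)^2 + F + c/2)/m^3 := by
        ring
      rw [e1, e2]
      gcongr
      rw [hCFdef]; linarith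
  _ ≤ ε * ((N:ℝ)^(2:ℕ))⁻¹ := by
      have h8 : 8*CF ≤ (N:ℝ)*ε := (div_le_iff₀ hε).1 hNCF
      have hcube : (N:ℝ)^3 ≤ 8*m^3 := by
        have h1 := pow_le_pow_left₀ hNpos.le hN2m 3
        have h2 : (2*m)^3 = 8*m^3 := by ring
        linarith [h1, h2.le]
      have key : CF*(N:ℝ)^2 ≤ ε*m^3 := by
        linarith only [mul_le_mul_of_nonneg_right h8 (sq_nonneg (N:ℝ)),
          mul_le_mul_of_nonneg_left hcube hε.le]
      rw [div_le_iff₀ (pow_pos hm0 3)]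
      have h3 : CF ≤ ε*m^3/(N:ℝ)^2 := (le_div_iff₀ (by positivity)).2 key
      have h4 : ε*m^3/(N:ℝ)^2 = ε*((N:ℝ)^(2:ℕ))⁻¹*m^3 := by ring
      linarith
end
end
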